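/- arXiv:2204.08964 — 2 statements merged into one kernel-verified Lean document; each statement's English description precedes it below -/
import Mathlib

section
/- Let {W_θ} be a family of unitaries on ℂ^D ⊗ ℂ^k depending differentiably on θ ∈ ℝ, let χ ∈ ℂ^k and ψ ∈ ℂ^D be unit vectors, W = W_{θ0}, Ẇ = (d/dθ)W_θ|_{θ0}, and assume: (i) W(ψ⊗χ) = ψ⊗χ; (ii) ⟨ψ⊗χ| W*Ẇ |ψ⊗χ⟩ = 0; (iii) for τ = Tr_u(Ẇ|ψ⊗χ⟩⟨ψ⊗χ|Ẇ*) and the transition operator T(ρ) = Tr_u(W(ρ⊗|χ⟩⟨χ|)W*) there is 0 ≤ a < 1 with Tr((1−|ψ⟩⟨ψ|) T^m(τ)) ≤ a^{2m} for all m ≥ 0. For each n, let Ψ_θ(n) = W_θ^(n)···W_θ^(1)(ψ⊗χ^⊗n), F(n) = 4(‖Ψ̇_{θ0}(n)‖² − |⟨Ψ_{θ0}(n),Ψ̇_{θ0}(n)⟩|²) the quantum Fisher information of this pure model at θ0. Let an adaptive measurement be given by orthonormal bases {e^[j]_i}_{i=1}^k of ℂ^k for each j (each possibly depending on the previous outcomes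 i_1,…,i_{j−1}), with output likelihood p_θ(i_1,…,i_n) = ‖K^[n]_{i_n}(θ)···K^[1]_{i_1}(θ)ψ‖² where K^[j]_i(θ) = ⟨e^[j]_i|W_θ|χ⟩, and classical Fisher information I(n) = Σ_{i_1,…,i_n: p_{θ0}>0} p_{θ0}(i_1,…,i_n)^{−1} ((d/dθ)p_θ(i_1,…,i_n)|_{θ0})². If the adaptive measurement, supplemented by a final projective measurement on ℂ^D, has total classical Fisher information at θ0 equal to F(n), then F(n) − I(n) ≤ 4/(1−a)² for all n. -/
open scoped BigOperators Matrix Kronecker ComplexConjugate Classical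
open Matrix

noncomputable section

/-- Inner product on `ι → ℂ`, conjugate-linear in the first argument. -/
def inn {ι : Type*} [Fintype ι] (v w : ι → ℂ) : ℂ := ∑ i, conj (v i) * w i

/-- Squared norm on `ι → ℂ`. -/
def nsq {ι : Type*} [Fintype ι] (v : ι → ℂ) : ℝ := ∑ i, Complex.normSq (v i)

/-- Tensor product of two vectors. -/
def vtens {α β : Type*} (v : α → ℂ) (w : β → ℂ) : α × β → ℂ := fun p => v p.1 * w p.2

/-- `n`-fold tensor power of a vector. -/
def vpow {ι : Type*} (n : ℕ) (χ : ι → ℂ) : (Fin n → ι) → ℂ := fun g => ∏ j, χ (g j)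

/-- Outer product `|v⟩⟨w|`. -/
def outer {α : Type*} (v w : α → ℂ) : Matrix α α ℂ := fun x y => v x * conj (w y)

/-- Ampliation of an operator on system ⊗ (single noise unit) to system ⊗ (n noise units),
acting on the `j`-th noise unit. -/
def amp {α ι : Type*} [DecidableEq ι] (n : ℕ) (W : Matrix (α × ι) (α × ι) ℂ) (j : Fin n) :
    Matrix (α × (Fin n → ι)) (α × (Fin n → ι)) ℂ :=
  fun p q => if ∀ l, l ≠ j → p.2 l = q.2 l then W (p.1, p.2 j) (q.1, q.2 j) else 0

/-- The `n`-step unitary `W⁽ⁿ⁾ ⋯ W⁽²⁾ W⁽¹⁾`. -/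
def steps {α ι : Type*} [Fintype α] [Fintype ι] [DecidableEq α] [DecidableEq ι]
    (n : ℕ) (W : Matrix (α × ι) (α × ι) ℂ) :
    Matrix (α × (Fin n → ι)) (α × (Fin n → ι)) ℂ :=
  ((List.ofFn fun j : Fin n => amp n W j).reverse).prod

/-- Kraus operator `⟨e|W|χ⟩`. -/
def kraus {α ι : Type*} [Fintype ι] (W : Matrix (α × ι) (α × ι) ℂ) (e χ : ι → ℂ) :
    Matrix α α ℂ :=
  fun s t => ∑ u, ∑ v, conj (e u) * W (s, u) (t, v) * χ v

/-- `A (n-1) ⋯ A 1 A 0`. -/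
def kprodFin {α : Type*} [Fintype α] [DecidableEq α] {n : ℕ} (A : Fin n → Matrix α α ℂ) :
    Matrix α α ℂ :=
  ((List.ofFn A).reverse).prod

/-- Partial trace over the noise unit. -/
def ptraceNoise {α ι : Type*} [Fintype ι] (A : Matrix (α × ι) (α × ι) ℂ) : Matrix α α ℂ :=
  fun s t => ∑ u, A (s, u) (t, u)

/-- Transition operator `T(ρ) = Tr_u (W (ρ ⊗ |χ⟩⟨χ|) W*)`. -/
def tmap {α ι : Type*} [Fintype α] [Fintype ι] (W : Matrix (α × ι) (α × ι) ℂ) (χ : ι → ℂ)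
    (ρ : Matrix α α ℂ) : Matrix α α ℂ :=
  ptraceNoise (W * (ρ ⊗ₖ outer χ χ) * Wᴴ)

section Basics
variable {ι : Type*} [Fintype ι]

lemma inn_eq_dot (v w : ι → ℂ) : inn v w = dotProduct (star v) w := by
  simp [inn, dotProduct]

lemma inn_self_eq_nsq (v : ι → ℂ) : inn v v = (nsq v : ℂ) := by
  unfold inn nsq
  push_cast
  exact Finset.sum_congr rfl fun i _ => (Complex.normSq_eq_conj_mul_self).symm

lemma nsq_eq_re_inn (v : ι → ℂ) : nsq v = (inn v v).re := by
  rw [inn_self_eq_nsq]; simp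

lemma nsq_nonneg (v : ι → ℂ) : 0 ≤ nsq v :=
  Finset.sum_nonneg fun i _ => Complex.normSq_nonneg _

lemma inn_smul_right (c : ℂ) (v w : ι → ℂ) : inn v (c • w) = c * inn v w := by
  unfold inn
  rw [Finset.mul_sum]
  exact Finset.sum_congr rfl fun i _ => by simp [Pi.smul_apply, smul_eq_mul]; ring

lemma nsq_smul (c : ℂ) (v : ι → ℂ) : nsq (c • v) = Complex.normSq c * nsq v := by
  simp [nsq, Finset.mul_sum, Complex.normSq_mul]

/-- `⟨Mv, Mw⟩ = ⟨v, (MᴴM)w⟩`. -/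
lemma inn_mulVec_mulVec (M : Matrix ι ι ℂ) (v w : ι → ℂ) :
    inn (M.mulVec v) (M.mulVec w) = inn v ((Mᴴ * M).mulVec w) := by
  rw [inn_eq_dot, inn_eq_dot, Matrix.star_mulVec, dotProduct_mulVec,
    Matrix.vecMul_vecMul, ← dotProduct_mulVec]

/-- Parseval, polarized form. -/
lemma parseval {k : ℕ} (f : Fin k → Fin k → ℂ)
    (hf : ∀ i i', inn (f i) (f i') = if i = i' then 1 else 0) (v w : Fin k → ℂ) :
    ∑ i, conj (inn (f i) v) * inn (f i) w = inn v w := by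
  classical
  set U : Matrix (Fin k) (Fin k) ℂ := Matrix.of fun i u => conj (f i u) with hU
  have hUU : U * Uᴴ = 1 := by
    ext i i'
    have := hf i i'
    simpa [hU, Matrix.mul_apply, Matrix.conjTranspose_apply, inn, Matrix.one_apply,
      mul_comm] using this
  have hUU' : Uᴴ * U = 1 := mul_eq_one_comm.1 hUU
  have h1 : ∀ x : Fin k → ℂ, ∀ i, inn (f i) x = U.mulVec x i := by
    intro x i
    simp [hU, inn, Matrix.mulVec, dotProduct]
  calc ∑ i, conj (inn (f i) v) * inn (f i) w
      = ∑ i, conj ((U.mulVec v) i) * (U.mulVec w) i :=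
        Finset.sum_congr rfl fun i _ => by rw [h1 v i, h1 w i]
    _ = inn (U.mulVec v) (U.mulVec w) := rfl
    _ = inn v ((Uᴴ * U).mulVec w) := inn_mulVec_mulVec U v w
    _ = inn v w := by rw [hUU']; simp

/-- Parseval, diagonal form. -/
lemma parseval_nsq {k : ℕ} (f : Fin k → Fin k → ℂ)
    (hf : ∀ i i', inn (f i) (f i') = if i = i' then 1 else 0) (v : Fin k → ℂ) :
    ∑ i, Complex.normSq (inn (f i) v) = nsq v := by
  have := parseval f hf v v
  have h2 : ∑ i, (Complex.normSq (inn (f i) v) : ℂ) = (nsq v : ℂ) := by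
    rw [← inn_self_eq_nsq, ← this]
    exact Finset.sum_congr rfl fun i _ => Complex.normSq_eq_conj_mul_self.symm ▸ rfl
  exact_mod_cast h2

end Basics

section Outer
variable {α ι : Type*} [Fintype α] [Fintype ι]

lemma conj_mul' (a b : ℂ) : conj (a * b) = conj a * conj b := map_mul _ a b

lemma star_eq_conj (a : ℂ) : star a = conj a := rfl

lemma outer_mulVec (v w u : α → ℂ) : (outer v w).mulVec u = inn w u • v := by
  funext x
  simp [outer, Matrix.mulVec, dotProduct, inn, Finset.sum_mul, Finset.mul_sum]
  exact Finset.sum_congr rfl fun i _ => by ring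

lemma conjTranspose_outer (v w : α → ℂ) : (outer v w)ᴴ = outer w v := by
  ext x y; simp [outer, Matrix.conjTranspose_apply, mul_comm]

lemma mul_outer_mul (M N : Matrix α α ℂ) (v w : α → ℂ) :
    M * outer v w * Nᴴ = outer (M.mulVec v) (N.mulVec w) := by
  ext x y
  simp only [Matrix.mul_apply, outer, Matrix.conjTranspose_apply, Matrix.mulVec,
    dotProduct, Finset.sum_mul, Finset.mul_sum, map_sum, conj_mul', star_eq_conj]
  conv_rhs => rw [Finset.sum_comm]
  rw [Finset.sum_comm]
  refine Finset.sum_congr rfl fun i _ => Finset.sum_congr rfl fun j _ => by ring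

lemma outer_mul_outer (v w x y : α → ℂ) :
    outer v w * outer x y = inn w x • outer v y := by
  ext s t
  simp only [Matrix.mul_apply, outer, Matrix.smul_apply, inn, Finset.sum_mul,
    Finset.mul_sum, smul_eq_mul]
  exact Finset.sum_congr rfl fun i _ => by ring

lemma trace_mul_outer (Q : Matrix α α ℂ) (v w : α → ℂ) :
    (Q * outer v w).trace = inn w (Q.mulVec v) := by
  simp only [Matrix.trace, Matrix.diag_apply, Matrix.mul_apply, outer, inn,
    Matrix.mulVec, dotProduct, Finset.mul_sum]
  exact Finset.sum_congr rfl fun i _ => Finset.sum_congr rfl fun j _ => by ring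

lemma outer_vtens (v : α → ℂ) (w : ι → ℂ) :
    outer (vtens v w) (vtens v w) = outer v v ⊗ₖ outer w w := by
  ext ⟨s, u⟩ ⟨t, u'⟩
  simp [outer, vtens, Matrix.kroneckerMap_apply]
  ring

lemma ptraceNoise_outer_vtens (v : α → ℂ) (w : ι → ℂ) :
    ptraceNoise (outer (vtens v w) (vtens v w)) = (nsq w : ℂ) • outer v v := by
  ext s t
  simp only [ptraceNoise, outer, vtens, Matrix.smul_apply, smul_eq_mul]
  rw [show ((nsq w : ℂ)) = ∑ u, w u * conj (w u) by
    rw [← inn_self_eq_nsq, inn]; exact Finset.sum_congr rfl fun i _ => by ring]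
  rw [Finset.sum_mul]
  exact Finset.sum_congr rfl fun u _ => by simp [conj_mul']; ring

/-- `T(|w⟩⟨w|) = Tr_u |V(w⊗χ)⟩⟨V(w⊗χ)|`. -/
lemma tmap_outer (V : Matrix (α × ι) (α × ι) ℂ) (χ : ι → ℂ) (w : α → ℂ) :
    tmap V χ (outer w w)
      = ptraceNoise (outer (V.mulVec (vtens w χ)) (V.mulVec (vtens w χ))) := by
  rw [tmap, ← outer_vtens, mul_outer_mul]

end Outer

section Chain
variable {α : Type*} [Fintype α] [DecidableEq α]

/-- `chain B v = B (n-1) ⋯ B 0 v`. -/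
def chain {α : Type*} [Fintype α] : {n : ℕ} → (Fin n → Matrix α α ℂ) → (α → ℂ) → (α → ℂ)
  | 0, _, v => v
  | (_+1), B, v => chain (fun j => B j.succ) ((B 0).mulVec v)

lemma kprodFin_succ {n : ℕ} (A : Fin (n+1) → Matrix α α ℂ) :
    kprodFin A = kprodFin (fun j => A j.succ) * A 0 := by
  unfold kprodFin
  rw [List.ofFn_succ, List.reverse_cons, List.prod_append, List.prod_singleton]

lemma kprodFin_mulVec : ∀ {n : ℕ} (A : Fin n → Matrix α α ℂ) (v : α → ℂ),
    (kprodFin A).mulVec v = chain A v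
  | 0, A, v => by
      unfold kprodFin chain
      simp
  | (n+1), A, v => by
      rw [kprodFin_succ, ← Matrix.mulVec_mulVec, kprodFin_mulVec (fun j => A j.succ)]
      rfl

lemma chain_add : ∀ {n : ℕ} (B : Fin n → Matrix α α ℂ) (v w : α → ℂ),
    chain B (fun x => v x + w x) = fun x => chain B v x + chain B w x
  | 0, B, v, w => rfl
  | (n+1), B, v, w => by
      show chain (fun j => B j.succ) ((B 0).mulVec fun x => v x + w x) = _
      have : ((B 0).mulVec fun x => v x + w x)
          = fun x => (B 0).mulVec v x + (B 0).mulVec w x := by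
        have := Matrix.mulVec_add (B 0) v w
        funext x; exact congrFun this x
      rw [this, chain_add]
      rfl

lemma chain_smul : ∀ {n : ℕ} (B : Fin n → Matrix α α ℂ) (c : ℂ) (v : α → ℂ),
    chain B (c • v) = c • chain B v
  | 0, B, c, v => rfl
  | (n+1), B, c, v => by
      show chain (fun j => B j.succ) ((B 0).mulVec (c • v)) = _
      rw [Matrix.mulVec_smul, chain_smul]
      rfl

lemma chain_zero : ∀ {n : ℕ} (B : Fin n → Matrix α α ℂ),
    chain B (fun _ => (0:ℂ)) = fun _ => (0:ℂ)
  | 0, B => rfl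
  | (n+1), B => by
      show chain (fun j => B j.succ) ((B 0).mulVec fun _ => 0) = _
      have : ((B 0).mulVec fun _ => (0:ℂ)) = fun _ => (0:ℂ) := by
        funext x; simp [Matrix.mulVec, dotProduct]
      rw [this, chain_zero]

/-- If each `B j` fixes `ψ` up to scalar `c j`, then the chain multiplies by `∏ c j`. -/
lemma chain_eigen : ∀ {n : ℕ} (B : Fin n → Matrix α α ℂ) (c : Fin n → ℂ) (ψ : α → ℂ),
    (∀ j, (B j).mulVec ψ = c j • ψ) → chain B ψ = (∏ j, c j) • ψ
  | 0, B, c, ψ, _ => by simp [chain]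
  | (n+1), B, c, ψ, h => by
      show chain (fun j => B j.succ) ((B 0).mulVec ψ) = _
      rw [h 0, chain_smul, chain_eigen (fun j => B j.succ) (fun j => c j.succ) ψ
        (fun j => h j.succ), Fin.prod_univ_succ, smul_smul]

end Chain

section Deriv
variable {θ0 : ℝ}

lemma hasDerivAt_re' {f : ℝ → ℂ} {f' : ℂ} (hf : HasDerivAt f f' θ0) :
    HasDerivAt (fun t => (f t).re) f'.re θ0 := by
  exact (Complex.reCLM.hasFDerivAt.comp_hasDerivAt θ0 hf)

lemma hasDerivAt_im' {f : ℝ → ℂ} {f' : ℂ} (hf : HasDerivAt f f' θ0) :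
    HasDerivAt (fun t => (f t).im) f'.im θ0 := by
  exact (Complex.imCLM.hasFDerivAt.comp_hasDerivAt θ0 hf)

lemma hasDerivAt_normSq {f : ℝ → ℂ} {f' : ℂ} (hf : HasDerivAt f f' θ0) :
    HasDerivAt (fun t => Complex.normSq (f t)) (2 * (conj (f θ0) * f').re) θ0 := by
  have hre := hasDerivAt_re' hf
  have him := hasDerivAt_im' hf
  have h := ((hre.fun_mul hre).fun_add (him.fun_mul him))
  have heq : (fun t => (f t).re * (f t).re + (f t).im * (f t).im)
      = fun t => Complex.normSq (f t) := by
    funext t; rw [Complex.normSq_apply]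
  rw [heq] at h
  refine h.congr_deriv ?_
  simp only [Complex.mul_re, Complex.conj_re, Complex.conj_im]
  ring

lemma chain_hasDerivAt {α : Type*} [Fintype α] :
    ∀ {n : ℕ} (B : Fin n → ℝ → Matrix α α ℂ) (Bd : Fin n → Matrix α α ℂ),
      (∀ j s t, HasDerivAt (fun θ => B j θ s t) (Bd j s t) θ0) →
      ∀ (v : ℝ → α → ℂ) (vd : α → ℂ),
      (∀ x, HasDerivAt (fun θ => v θ x) (vd x) θ0) →
      ∀ x : α,
      HasDerivAt (fun θ => chain (fun j => B j θ) (v θ) x)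
        ((∑ m : Fin n, chain (fun j => if j = m then Bd j else B j θ0) (v θ0) x)
          + chain (fun j => B j θ0) vd x) θ0
  | 0, B, Bd, hB, v, vd, hv, x => by
      simpa [chain] using hv x
  | (n+1), B, Bd, hB, v, vd, hv, x => by
      have hw : ∀ y, HasDerivAt (fun θ => (B 0 θ).mulVec (v θ) y)
          ((Bd 0).mulVec (v θ0) y + (B 0 θ0).mulVec vd y) θ0 := by
        intro y
        have h2 : (Bd 0).mulVec (v θ0) y + (B 0 θ0).mulVec vd y
            = ∑ t, (Bd 0 y t * v θ0 t + B 0 θ0 y t * vd t) := by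
          rw [Finset.sum_add_distrib]; rfl
        rw [h2]
        exact HasDerivAt.fun_sum fun t _ => (hB 0 y t).fun_mul (hv t)
      have IH := chain_hasDerivAt (fun j => B j.succ) (fun j => Bd j.succ)
          (fun j => hB j.succ) (fun θ => (B 0 θ).mulVec (v θ))
          (fun y => (Bd 0).mulVec (v θ0) y + (B 0 θ0).mulVec vd y) hw x
      have h0 : chain (fun j : Fin (n+1) => if j = 0 then Bd j else B j θ0) (v θ0)
          = chain (fun j : Fin n => B j.succ θ0) ((Bd 0).mulVec (v θ0)) := by
        show chain (fun j : Fin n => if j.succ = 0 then Bd j.succ else B j.succ θ0)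
          ((if (0 : Fin (n+1)) = 0 then Bd 0 else B 0 θ0).mulVec (v θ0)) = _
        simp [Fin.succ_ne_zero]
      have hs : ∀ m : Fin n,
          chain (fun j : Fin (n+1) => if j = m.succ then Bd j else B j θ0) (v θ0)
          = chain (fun j : Fin n => if j = m then Bd j.succ else B j.succ θ0)
              ((B 0 θ0).mulVec (v θ0)) := by
        intro m
        show chain (fun j : Fin n => if j.succ = m.succ then Bd j.succ else B j.succ θ0)
          ((if (0 : Fin (n+1)) = m.succ then Bd 0 else B 0 θ0).mulVec (v θ0)) = _
        have h1 : (0 : Fin (n+1)) ≠ m.succ := Ne.symm (Fin.succ_ne_zero m)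
        simp [Fin.succ_inj, h1]
      have hlast := congrFun (chain_add (fun j : Fin n => B j.succ θ0)
          ((Bd 0).mulVec (v θ0)) ((B 0 θ0).mulVec vd)) x
      convert IH using 1
      · rfl
      rw [Fin.sum_univ_succ, h0, hlast]
      rw [Finset.sum_congr rfl fun m _ => congrFun (hs m) x]
      have hrfl : chain (fun j : Fin (n+1) => B j θ0) vd x
          = chain (fun j : Fin n => B j.succ θ0) ((B 0 θ0).mulVec vd) x := rfl
      rw [hrfl]; ring

end Deriv

section Kraus
variable {D k : ℕ} {θ0 : ℝ}

lemma kraus_hasDerivAt {W : ℝ → Matrix (Fin D × Fin k) (Fin D × Fin k) ℂ}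
    {Wd : Matrix (Fin D × Fin k) (Fin D × Fin k) ℂ}
    (hWd : ∀ p q, HasDerivAt (fun θ => W θ p q) (Wd p q) θ0)
    (f χ : Fin k → ℂ) (s t : Fin D) :
    HasDerivAt (fun θ => kraus (W θ) f χ s t) (kraus Wd f χ s t) θ0 := by
  unfold kraus
  refine HasDerivAt.fun_sum fun u _ => HasDerivAt.fun_sum fun v _ => ?_
  simpa [mul_assoc] using ((hWd (s,u) (t,v)).const_mul (conj (f u))).mul_const (χ v)

/-- The Kraus operator as a partial inner product on the image vector. -/
lemma kraus_mulVec_apply (V : Matrix (Fin D × Fin k) (Fin D × Fin k) ℂ)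
    (f χ : Fin k → ℂ) (w : Fin D → ℂ) (s : Fin D) :
    (kraus V f χ).mulVec w s = inn f (fun u => V.mulVec (vtens w χ) (s, u)) := by
  simp only [Matrix.mulVec, dotProduct, kraus, inn, vtens, Finset.sum_mul,
    Finset.mul_sum, Fintype.sum_prod_type]
  rw [Finset.sum_comm]
  exact Finset.sum_congr rfl fun u _ => Finset.sum_congr rfl fun t _ =>
    Finset.sum_congr rfl fun v _ => by ring

/-- Channel-sum identity: for any ONB `f`, `∑ᵢ |Kᵢw⟩⟨Kᵢw| = T(|w⟩⟨w|)`. -/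
lemma sum_outer_kraus (V : Matrix (Fin D × Fin k) (Fin D × Fin k) ℂ)
    (χ : Fin k → ℂ) (f : Fin k → Fin k → ℂ)
    (hf : ∀ i i', inn (f i) (f i') = if i = i' then 1 else 0) (w : Fin D → ℂ) :
    ∑ x, outer ((kraus V (f x) χ).mulVec w) ((kraus V (f x) χ).mulVec w)
      = tmap V χ (outer w w) := by
  rw [tmap_outer]
  ext s t
  have hsum : (∑ x, outer ((kraus V (f x) χ).mulVec w) ((kraus V (f x) χ).mulVec w)) s t
      = ∑ x, ((kraus V (f x) χ).mulVec w s) * conj ((kraus V (f x) χ).mulVec w t) := by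
    simp [Matrix.sum_apply, outer]
  have hL : ∀ (x : Fin k) (s : Fin D),
      (kraus V (f x) χ).mulVec w s = inn (f x) (fun u => V.mulVec (vtens w χ) (s, u)) :=
    fun x s => kraus_mulVec_apply V (f x) χ w s
  rw [hsum]
  calc ∑ x, ((kraus V (f x) χ).mulVec w s) * conj ((kraus V (f x) χ).mulVec w t)
      = conj (∑ x, conj (inn (f x) (fun u => V.mulVec (vtens w χ) (s, u)))
          * inn (f x) (fun u => V.mulVec (vtens w χ) (t, u))) := by
        rw [map_sum]
        exact Finset.sum_congr rfl fun x _ => by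
          rw [hL x s, hL x t, conj_mul']; simp [mul_comm]
    _ = conj (inn (fun u => V.mulVec (vtens w χ) (s, u))
          (fun u => V.mulVec (vtens w χ) (t, u))) := by
        rw [parseval f hf]
    _ = ptraceNoise (outer (V.mulVec (vtens w χ)) (V.mulVec (vtens w χ))) s t := by
        simp only [inn, ptraceNoise, outer, map_sum, conj_mul']
        exact Finset.sum_congr rfl fun u _ => by simp [mul_comm]

end Kraus

section Kraus2
variable {D k : ℕ}

/-- Stationarity: each Kraus operator fixes `ψ` up to the scalar `⟨f, χ⟩`. -/
lemma kraus_eigen (V : Matrix (Fin D × Fin k) (Fin D × Fin k) ℂ)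
    (ψ : Fin D → ℂ) (χ f : Fin k → ℂ) (hstat : V.mulVec (vtens ψ χ) = vtens ψ χ) :
    (kraus V f χ).mulVec ψ = inn f χ • ψ := by
  funext s
  rw [kraus_mulVec_apply, hstat]
  simp only [inn, vtens, Pi.smul_apply, smul_eq_mul, Finset.sum_mul, Finset.mul_sum]
  exact Finset.sum_congr rfl fun u _ => by ring

lemma ptraceNoise_add (A B : Matrix (Fin D × Fin k) (Fin D × Fin k) ℂ) :
    ptraceNoise (A + B) = ptraceNoise A + ptraceNoise B := by
  ext s t; simp [ptraceNoise, Finset.sum_add_distrib]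

lemma tmap_add (V : Matrix (Fin D × Fin k) (Fin D × Fin k) ℂ) (χ : Fin k → ℂ)
    (A B : Matrix (Fin D) (Fin D) ℂ) :
    tmap V χ (A + B) = tmap V χ A + tmap V χ B := by
  unfold tmap
  rw [Matrix.add_kronecker, mul_add, add_mul, ptraceNoise_add]

lemma tmap_zero (V : Matrix (Fin D × Fin k) (Fin D × Fin k) ℂ) (χ : Fin k → ℂ) :
    tmap V χ 0 = 0 := by
  unfold tmap
  rw [Matrix.zero_kronecker, mul_zero, zero_mul]
  ext s t; simp [ptraceNoise]

lemma tmap_smul (V : Matrix (Fin D × Fin k) (Fin D × Fin k) ℂ) (χ : Fin k → ℂ)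
    (c : ℂ) (A : Matrix (Fin D) (Fin D) ℂ) :
    tmap V χ (c • A) = c • tmap V χ A := by
  unfold tmap
  rw [Matrix.smul_kronecker, mul_smul_comm, Matrix.smul_mul]
  ext s t; simp [ptraceNoise, Finset.mul_sum]

lemma tmap_sum {G : Type*} [Fintype G] (V : Matrix (Fin D × Fin k) (Fin D × Fin k) ℂ)
    (χ : Fin k → ℂ) (M : G → Matrix (Fin D) (Fin D) ℂ) :
    tmap V χ (∑ g, M g) = ∑ g, tmap V χ (M g) := by
  classical
  induction (Finset.univ : Finset G) using Finset.induction_on with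
  | empty => simpa using tmap_zero V χ
  | insert a s h ih => rw [Finset.sum_insert h, Finset.sum_insert h, tmap_add, ih]

/-- Stationarity of the transition operator on `|ψ⟩⟨ψ|`. -/
lemma tmap_stat (V : Matrix (Fin D × Fin k) (Fin D × Fin k) ℂ)
    (ψ : Fin D → ℂ) (χ : Fin k → ℂ) (hχ : nsq χ = 1)
    (hstat : V.mulVec (vtens ψ χ) = vtens ψ χ) :
    tmap V χ (outer ψ ψ) = outer ψ ψ := by
  rw [tmap_outer, hstat, ptraceNoise_outer_vtens, hχ]
  simp

end Kraus2

section Proj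
variable {D : ℕ}

lemma inn_self_one {ψ : Fin D → ℂ} (hψ : nsq ψ = 1) : inn ψ ψ = 1 := by
  rw [inn_self_eq_nsq, hψ]; norm_num

lemma Qproj_herm (ψ : Fin D → ℂ) : (1 - outer ψ ψ)ᴴ = 1 - outer ψ ψ := by
  rw [Matrix.conjTranspose_sub, Matrix.conjTranspose_one, conjTranspose_outer]

lemma Qproj_idem {ψ : Fin D → ℂ} (hψ : nsq ψ = 1) :
    (1 - outer ψ ψ) * (1 - outer ψ ψ) = 1 - outer ψ ψ := by
  have h := outer_mul_outer ψ ψ ψ ψ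
  rw [inn_self_one hψ, one_smul] at h
  rw [mul_sub, sub_mul, sub_mul, h]
  simp only [Matrix.one_mul, Matrix.mul_one]
  abel

lemma Qproj_mulVec (ψ u : Fin D → ℂ) :
    (1 - outer ψ ψ).mulVec u = fun x => u x - inn ψ u * ψ x := by
  funext x
  rw [Matrix.sub_mulVec]
  simp [outer_mulVec, Matrix.one_mulVec]

lemma nsq_Qproj_mulVec {ψ : Fin D → ℂ} (hψ : nsq ψ = 1) (y : Fin D → ℂ) :
    nsq ((1 - outer ψ ψ).mulVec y) = (((1 - outer ψ ψ) * outer y y).trace).re := by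
  rw [nsq_eq_re_inn, inn_mulVec_mulVec, Qproj_herm, Qproj_idem hψ, trace_mul_outer]

end Proj

section Pch
variable {α : Type*} [Fintype α]

/-- Partial chain: apply the first `j` of the `n` step operators. -/
def pch {n : ℕ} (B : Fin n → Matrix α α ℂ) (v : α → ℂ) : ℕ → α → ℂ
  | 0 => v
  | (j+1) => if h : j < n then (B ⟨j, h⟩).mulVec (pch B v j) else pch B v j

lemma pch_shift {n : ℕ} (B : Fin (n+1) → Matrix α α ℂ) (v : α → ℂ) :
    ∀ j : ℕ, pch B v (j+1) = pch (fun j => B j.succ) ((B 0).mulVec v) j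
  | 0 => by
      show (if h : 0 < n + 1 then (B ⟨0, h⟩).mulVec (pch B v 0) else pch B v 0) = _
      rw [dif_pos (Nat.succ_pos n)]
      rfl
  | (j+1) => by
      show (if h : j+1 < n + 1 then (B ⟨j+1, h⟩).mulVec (pch B v (j+1)) else pch B v (j+1))
        = (if h : j < n then ((fun l : Fin n => B l.succ) ⟨j, h⟩).mulVec
            (pch (fun l => B l.succ) ((B 0).mulVec v) j)
          else pch (fun l => B l.succ) ((B 0).mulVec v) j)
      rw [pch_shift B v j]
      by_cases h : j < n
      · rw [dif_pos (Nat.succ_lt_succ h), dif_pos h]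
        congr 1
      · rw [dif_neg (fun hc => h (Nat.lt_of_succ_lt_succ hc)), dif_neg h]

lemma chain_eq_pch : ∀ {n : ℕ} (B : Fin n → Matrix α α ℂ) (v : α → ℂ),
    chain B v = pch B v n
  | 0, B, v => rfl
  | (n+1), B, v => by
      show chain (fun j => B j.succ) ((B 0).mulVec v) = _
      rw [chain_eq_pch, ← pch_shift]

lemma pch_congr {n : ℕ} (B B' : Fin n → Matrix α α ℂ) (v : α → ℂ) :
    ∀ j : ℕ, (∀ l : Fin n, l.val < j → B l = B' l) → pch B v j = pch B' v j
  | 0, _ => rfl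
  | (j+1), h => by
      have IH := pch_congr B B' v j (fun l hl => h l (Nat.lt_succ_of_lt hl))
      show (if hj : j < n then (B ⟨j, hj⟩).mulVec (pch B v j) else pch B v j)
        = (if hj : j < n then (B' ⟨j, hj⟩).mulVec (pch B' v j) else pch B' v j)
      by_cases hj : j < n
      · rw [dif_pos hj, dif_pos hj, IH, h ⟨j, hj⟩ (Nat.lt_succ_self j)]
      · rw [dif_neg hj, dif_neg hj, IH]

end Pch

section Recursion
variable {D k n : ℕ}

/-- The step operators with the derivative Kraus operator in slot `m`. -/
def Bm (V Vd : Matrix (Fin D × Fin k) (Fin D × Fin k) ℂ) (χ : Fin k → ℂ)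
    (E : Fin n → (Fin n → Fin k) → Fin k → Fin k → ℂ) (m : Fin n)
    (g : Fin n → Fin k) : Fin n → Matrix (Fin D) (Fin D) ℂ :=
  fun j => if j = m then kraus Vd (E j g (g j)) χ else kraus V (E j g (g j)) χ

lemma sum_outer_pch (hk : k ≠ 0)
    (V Vd : Matrix (Fin D × Fin k) (Fin D × Fin k) ℂ) (χ : Fin k → ℂ) (ψ : Fin D → ℂ)
    (E : Fin n → (Fin n → Fin k) → Fin k → Fin k → ℂ)
    (hadapt : ∀ (j : Fin n) (g g' : Fin n → Fin k),
      (∀ l : Fin n, l < j → g l = g' l) → E j g = E j g')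
    (honb : ∀ (j : Fin n) (g : Fin n → Fin k) (i i' : Fin k),
      inn (E j g i) (E j g i') = if i = i' then 1 else 0)
    (m : Fin n)
    (hVstat : tmap V χ (outer ψ ψ) = outer ψ ψ) :
    ∀ j : ℕ, j ≤ n →
      ∑ g : Fin n → Fin k,
          outer (pch (Bm V Vd χ E m g) ψ j) (pch (Bm V Vd χ E m g) ψ j)
        = ((k : ℂ) ^ (n - j)) •
          (if j ≤ m.val then outer ψ ψ
           else (tmap V χ)^[j - m.val - 1] (tmap Vd χ (outer ψ ψ)))
  | 0, _ => by
      have h0 : (0:ℕ) ≤ m.val := Nat.zero_le _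
      rw [if_pos h0]
      have : ∀ g : Fin n → Fin k, pch (Bm V Vd χ E m g) ψ 0 = ψ := fun g => rfl
      rw [Finset.sum_congr rfl fun g _ => by rw [this g]]
      rw [Finset.sum_const, Finset.card_univ]
      rw [← Nat.cast_smul_eq_nsmul ℂ]
      congr 1
      simp [Nat.sub_zero]
  | (j+1), hj1 => by
      have hj : j < n := hj1
      have IH := sum_outer_pch hk V Vd χ ψ E hadapt honb m hVstat j (Nat.le_of_lt hj)
      have hk' : (k:ℂ) ≠ 0 := Nat.cast_ne_zero.2 hk
      set jf : Fin n := ⟨j, hj⟩ with hjf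
      obtain ⟨x0⟩ : Nonempty (Fin k) := ⟨⟨0, Nat.pos_of_ne_zero hk⟩⟩
      set BB : (Fin n → Fin k) → Fin n → Matrix (Fin D) (Fin D) ℂ := Bm V Vd χ E m with hBB
      set eqv := Equiv.funSplitAt jf (Fin k) with heqv
      -- basic facts about the splitting
      have fact1 : ∀ (x : Fin k) (h : {l // l ≠ jf} → Fin k) (l : Fin n) (hl : l ≠ jf),
          eqv.symm (x, h) l = h ⟨l, hl⟩ := by
        intro x h l hl
        rw [heqv, Equiv.funSplitAt_symm_apply, dif_neg hl]
      have fact2 : ∀ (x : Fin k) (h : {l // l ≠ jf} → Fin k), eqv.symm (x, h) jf = x := by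
        intro x h
        rw [heqv, Equiv.funSplitAt_symm_apply, dif_pos rfl]
      have hne : ∀ (l : Fin n), l.val < j → l ≠ jf := by
        intro l hl hc
        rw [hc, hjf] at hl
        exact Nat.lt_irrefl j hl
      have fagree : ∀ (x x' : Fin k) (h : {l // l ≠ jf} → Fin k) (l : Fin n), l.val < j →
          eqv.symm (x, h) l = eqv.symm (x', h) l := by
        intro x x' h l hl
        rw [fact1 x h l (hne l hl), fact1 x' h l (hne l hl)]
      have fact3 : ∀ (x : Fin k) (h : {l // l ≠ jf} → Fin k),
          pch (BB (eqv.symm (x, h))) ψ j = pch (BB (eqv.symm (x0, h))) ψ j := by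
        intro x h
        refine pch_congr _ _ ψ j fun l hl => ?_
        have hEg : E l (eqv.symm (x, h)) = E l (eqv.symm (x0, h)) := by
          refine hadapt l _ _ fun l' hl' => ?_
          exact fagree x x0 h l' (Nat.lt_of_lt_of_le hl' (Nat.le_of_lt hl))
        have hgl : eqv.symm (x, h) l = eqv.symm (x0, h) l := fagree x x0 h l hl
        rw [hBB]
        unfold Bm
        rw [hEg, hgl]
      have fact4 : ∀ (x : Fin k) (h : {l // l ≠ jf} → Fin k),
          E jf (eqv.symm (x, h)) = E jf (eqv.symm (x0, h)) := by
        intro x h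
        exact hadapt jf _ _ fun l hl => fagree x x0 h l hl
      -- unfold one step of pch
      have hstep : ∀ g, pch (BB g) ψ (j+1) = (BB g jf).mulVec (pch (BB g) ψ j) := by
        intro g
        show (if h : j < n then (BB g ⟨j, h⟩).mulVec (pch (BB g) ψ j) else _) = _
        rw [dif_pos hj]
      -- the step operator over the split
      have hBjf : ∀ (x : Fin k) (h : {l // l ≠ jf} → Fin k),
          BB (eqv.symm (x, h)) jf
            = kraus (if jf = m then Vd else V) (E jf (eqv.symm (x0, h)) x) χ := by
        intro x h
        rw [hBB]
        unfold Bm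
        rw [fact4 x h, fact2 x h, apply_ite (fun M => kraus M (E jf (eqv.symm (x0, h)) x) χ)]
      -- rewrite the sum over the equivalence
      have hsplit : ∀ (F : (Fin n → Fin k) → Matrix (Fin D) (Fin D) ℂ),
          ∑ g, F g = ∑ h : {l // l ≠ jf} → Fin k, ∑ x : Fin k, F (eqv.symm (x, h)) := by
        intro F
        rw [Fintype.sum_equiv eqv F (fun z => F (eqv.symm z))
          (fun g => by simp), Fintype.sum_prod_type]
        exact Finset.sum_comm
      -- the inner sums
      have hinner : ∀ h : {l // l ≠ jf} → Fin k,
          ∑ x : Fin k, outer (pch (BB (eqv.symm (x, h))) ψ (j+1))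
              (pch (BB (eqv.symm (x, h))) ψ (j+1))
            = tmap (if jf = m then Vd else V) χ
                (outer (pch (BB (eqv.symm (x0, h))) ψ j) (pch (BB (eqv.symm (x0, h))) ψ j)) := by
        intro h
        rw [Finset.sum_congr rfl fun x _ => by
          rw [hstep (eqv.symm (x, h)), fact3 x h, hBjf x h]]
        exact sum_outer_kraus _ χ (E jf (eqv.symm (x0, h))) (honb jf (eqv.symm (x0, h)))
          (pch (BB (eqv.symm (x0, h))) ψ j)
      -- relate ∑ₕ to the previous level
      have h1 : ∀ h : {l // l ≠ jf} → Fin k,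
          (∑ x : Fin k, outer (pch (BB (eqv.symm (x, h))) ψ j) (pch (BB (eqv.symm (x, h))) ψ j))
            = (k:ℂ) • outer (pch (BB (eqv.symm (x0, h))) ψ j) (pch (BB (eqv.symm (x0, h))) ψ j) := by
        intro h
        rw [Finset.sum_congr rfl fun x _ => by rw [fact3 x h]]
        rw [Finset.sum_const, Finset.card_univ, Fintype.card_fin, ← Nat.cast_smul_eq_nsmul ℂ]
      have hSj : ∑ g, outer (pch (BB g) ψ j) (pch (BB g) ψ j)
          = (k:ℂ) • (∑ h : {l // l ≠ jf} → Fin k,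
            outer (pch (BB (eqv.symm (x0, h))) ψ j) (pch (BB (eqv.symm (x0, h))) ψ j)) := by
        rw [hsplit (fun g => outer (pch (BB g) ψ j) (pch (BB g) ψ j))]
        rw [Finset.sum_congr rfl fun h _ => h1 h, ← Finset.smul_sum]
      have hSh : (∑ h : {l // l ≠ jf} → Fin k,
            outer (pch (BB (eqv.symm (x0, h))) ψ j) (pch (BB (eqv.symm (x0, h))) ψ j))
          = (k:ℂ)⁻¹ • ∑ g, outer (pch (BB g) ψ j) (pch (BB g) ψ j) := by
        rw [hSj, smul_smul, inv_mul_cancel₀ hk', one_smul]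
      -- assemble
      calc ∑ g, outer (pch (BB g) ψ (j+1)) (pch (BB g) ψ (j+1))
          = ∑ h : {l // l ≠ jf} → Fin k, ∑ x : Fin k,
              outer (pch (BB (eqv.symm (x, h))) ψ (j+1)) (pch (BB (eqv.symm (x, h))) ψ (j+1)) :=
            hsplit _
        _ = ∑ h : {l // l ≠ jf} → Fin k, tmap (if jf = m then Vd else V) χ
              (outer (pch (BB (eqv.symm (x0, h))) ψ j) (pch (BB (eqv.symm (x0, h))) ψ j)) :=
            Finset.sum_congr rfl fun h _ => hinner h
        _ = tmap (if jf = m then Vd else V) χ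
              ((k:ℂ)⁻¹ • ∑ g, outer (pch (BB g) ψ j) (pch (BB g) ψ j)) := by
            rw [← tmap_sum, hSh]
        _ = ((k:ℂ)⁻¹ * (k:ℂ)^(n-j)) • tmap (if jf = m then Vd else V) χ
              (if j ≤ m.val then outer ψ ψ
               else (tmap V χ)^[j - m.val - 1] (tmap Vd χ (outer ψ ψ))) := by
            rw [IH, tmap_smul, tmap_smul, smul_smul]
        _ = ((k : ℂ) ^ (n - (j+1))) •
            (if j+1 ≤ m.val then outer ψ ψ
             else (tmap V χ)^[(j+1) - m.val - 1] (tmap Vd χ (outer ψ ψ))) := by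
            have hpow : (k:ℂ)⁻¹ * (k:ℂ)^(n-j) = (k:ℂ)^(n-(j+1)) := by
              have hnj : n - j = (n - (j+1)) + 1 := by omega
              rw [hnj, pow_succ, mul_comm ((k:ℂ)^(n-(j+1))) (k:ℂ), ← mul_assoc,
                inv_mul_cancel₀ hk', one_mul]
            rw [hpow]
            congr 1
            by_cases hm : jf = m
            · have hjm : j = m.val := by rw [← hm, hjf]
              rw [if_pos hm, if_pos (le_of_eq hjm), if_neg (by omega)]
              have : j + 1 - m.val - 1 = 0 := by omega
              rw [this, Function.iterate_zero_apply]
            · have hjm : j ≠ m.val := fun hc => hm (Fin.ext hc)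
              rw [if_neg hm]
              by_cases hlt : j < m.val
              · rw [if_pos (Nat.le_of_lt hlt), if_pos (by omega), hVstat]
              · have hgt : m.val < j := by omega
                rw [if_neg (by omega), if_neg (by omega)]
                have h1 : j + 1 - m.val - 1 = (j - m.val - 1) + 1 := by omega
                rw [h1, Function.iterate_succ_apply']

section Bracket
variable {D : ℕ}

lemma inn_sub_smul {ι : Type*} [Fintype ι] (a u ψ : ι → ℂ) (cu : ℂ) :
    inn a (fun x => u x - cu * ψ x) = inn a u - cu * inn a ψ := by
  unfold inn
  rw [Finset.mul_sum, ← Finset.sum_sub_distrib]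
  exact Finset.sum_congr rfl fun x _ => by ring

lemma inn_smul_left {ι : Type*} [Fintype ι] (c : ℂ) (v w : ι → ℂ) :
    inn (c • v) w = conj c * inn v w := by
  unfold inn
  rw [Finset.mul_sum]
  exact Finset.sum_congr rfl fun i _ => by simp [conj_mul']; ring

/-- Per-record bound: extra Fisher information of the final measurement is at most the
conditional QFI `4‖(1-|ψ⟩⟨ψ|)u‖²`, when the conditional state is `lam • ψ`. -/
lemma bracket_bound (ψ u : Fin D → ℂ) (hψ : nsq ψ = 1)
    (es : Fin D → Fin D → ℂ)
    (hes : ∀ i i', inn (es i) (es i') = if i = i' then 1 else 0)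
    (lam : ℂ) :
    (∑ i0, if Complex.normSq (inn (es i0) (lam • ψ)) ≠ 0 then
        (Complex.normSq (inn (es i0) (lam • ψ)))⁻¹
          * (2 * (conj (inn (es i0) (lam • ψ)) * inn (es i0) u).re)^2 else 0)
      - (if nsq (lam • ψ) ≠ 0 then
          (nsq (lam • ψ))⁻¹ * (2 * (inn (lam • ψ) u).re)^2 else 0)
      ≤ 4 * nsq (fun x => u x - inn ψ u * ψ x) := by
  set w : Fin D → ℂ := fun x => u x - inn ψ u * ψ x with hwdef
  have hnsqw : 0 ≤ nsq w := nsq_nonneg w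
  by_cases hlam : lam = 0
  · subst hlam
    have h0 : ∀ i0 : Fin D, inn (es i0) ((0:ℂ) • ψ) = 0 := by
      intro i0; simp [inn]
    have h1 : nsq ((0:ℂ) • ψ) = 0 := by simp [nsq]
    have h2 : (∑ i0, if Complex.normSq (inn (es i0) ((0:ℂ) • ψ)) ≠ 0 then
        (Complex.normSq (inn (es i0) ((0:ℂ) • ψ)))⁻¹
          * (2 * (conj (inn (es i0) ((0:ℂ) • ψ)) * inn (es i0) u).re)^2 else 0) = 0 :=
      Finset.sum_eq_zero fun i0 _ => by rw [h0 i0]; simp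
    rw [h2, if_neg (by simp [nsq])]
    linarith
  -- main case
  have hP : nsq (lam • ψ) = Complex.normSq lam := by rw [nsq_smul, hψ, mul_one]
  have hPpos : 0 < Complex.normSq lam := Complex.normSq_pos.2 hlam
  set P := Complex.normSq lam with hPdef
  set PD := 2 * (inn (lam • ψ) u).re with hPDdef
  have hPD2 : PD = 2 * (conj lam * inn ψ u).re := by rw [hPDdef, inn_smul_left]
  -- decomposition of inner products
  have hinw : ∀ i0 : Fin D, inn (es i0) w = inn (es i0) u - inn ψ u * inn (es i0) ψ := by
    intro i0
    rw [hwdef]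
    exact inn_sub_smul (es i0) u ψ (inn ψ u)
  have hdecomp : ∀ i0 : Fin D, inn (es i0) u = inn ψ u * inn (es i0) ψ + inn (es i0) w := by
    intro i0; rw [hinw i0]; ring
  have hw0 : inn ψ w = 0 := by
    have h1 : inn ψ w = inn ψ u - inn ψ u * inn ψ ψ := by
      rw [hwdef]
      exact inn_sub_smul ψ u ψ (inn ψ u)
    rw [h1, inn_self_one hψ]; ring
  -- termwise bound
  have hterm : ∀ i0 : Fin D,
      (if Complex.normSq (inn (es i0) (lam • ψ)) ≠ 0 then
        (Complex.normSq (inn (es i0) (lam • ψ)))⁻¹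
          * (2 * (conj (inn (es i0) (lam • ψ)) * inn (es i0) u).re)^2 else 0)
      ≤ Complex.normSq (inn (es i0) ψ) * (P⁻¹ * PD^2)
        + (2 * PD * P⁻¹) * (2 * (conj lam * (conj (inn (es i0) ψ) * inn (es i0) w)).re)
        + 4 * Complex.normSq (inn (es i0) w) := by
    intro i0
    set z := inn (es i0) ψ with hz
    set zw := inn (es i0) w with hzw
    set c := Complex.normSq z with hc
    set r := 2 * (conj lam * (conj z * zw)).re with hr
    have hq : inn (es i0) (lam • ψ) = lam * z := inn_smul_right lam (es i0) ψ
    have hQD : 2 * (conj (inn (es i0) (lam • ψ)) * inn (es i0) u).re = c * PD + r := by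
      rw [hq, hdecomp i0, ← hz, ← hzw]
      have hrw : conj (lam * z) * (inn ψ u * z + zw)
          = (conj lam * inn ψ u) * ((c:ℝ):ℂ) + conj lam * (conj z * zw) := by
        rw [show ((c:ℝ):ℂ) = conj z * z from Complex.normSq_eq_conj_mul_self, conj_mul']
        ring
      rw [hrw]
      rw [Complex.add_re, Complex.mul_re]
      simp only [Complex.ofReal_re, Complex.ofReal_im, mul_zero, sub_zero]
      rw [hPD2, hr]
      ring
    by_cases hc0 : c = 0
    · have hz0 : z = 0 := by
        have h3 : Complex.normSq z = 0 := by rw [← hc]; exact hc0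
        exact Complex.normSq_eq_zero.1 h3
      have : inn (es i0) (lam • ψ) = 0 := by rw [hq, hz0, mul_zero]
      rw [this]
      have hr0 : r = 0 := by rw [hr, hz0]; simp
      simp only [map_zero]  -- normSq 0 = 0
      rw [if_neg (by simp)]
      rw [hc0, hr0]
      have := Complex.normSq_nonneg zw
      nlinarith
    · have hcpos : 0 < c := lt_of_le_of_ne (Complex.normSq_nonneg z) (Ne.symm hc0)
      have hqs : Complex.normSq (inn (es i0) (lam • ψ)) = P * c := by
        rw [hq, Complex.normSq_mul, hPdef, hc]
      rw [hqs, if_pos (by positivity), hQD]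
      have hr2 : r^2 ≤ 4 * (P * c * Complex.normSq zw) := by
        have h1 : (conj lam * (conj z * zw)).re^2 ≤ Complex.normSq (conj lam * (conj z * zw)) := by
          rw [Complex.normSq_apply]
          nlinarith [sq_nonneg (conj lam * (conj z * zw)).im]
        have h2 : Complex.normSq (conj lam * (conj z * zw))
            = P * (c * Complex.normSq zw) := by
          rw [Complex.normSq_mul, Complex.normSq_mul, Complex.normSq_conj,
            Complex.normSq_conj, hPdef, hc]
        rw [hr]
        nlinarith
      have hexp : (P*c)⁻¹ * (c*PD + r)^2
          = c * (P⁻¹ * PD^2) + (2 * PD * P⁻¹) * r + (P*c)⁻¹ * r^2 := by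
        field_simp
        ring
      rw [hexp]
      have hlast : (P*c)⁻¹ * r^2 ≤ 4 * Complex.normSq zw := by
        rw [inv_mul_le_iff₀ (by positivity)]
        nlinarith
      linarith
  -- sum the termwise bounds
  have hsum := Finset.sum_le_sum fun i0 (_ : i0 ∈ Finset.univ) => hterm i0
  rw [Finset.sum_add_distrib, Finset.sum_add_distrib] at hsum
  have hc1 : ∑ i0, Complex.normSq (inn (es i0) ψ) * (P⁻¹ * PD^2) = P⁻¹ * PD^2 := by
    rw [← Finset.sum_mul, parseval_nsq es hes ψ, hψ, one_mul]
  have hrsum : ∑ i0, (2 * PD * P⁻¹) * (2 * (conj lam * (conj (inn (es i0) ψ) * inn (es i0) w)).re) = 0 := by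
    rw [← Finset.mul_sum]
    have h1 : ∑ i0, 2 * (conj lam * (conj (inn (es i0) ψ) * inn (es i0) w)).re
        = 2 * (conj lam * inn ψ w).re := by
      rw [← Finset.mul_sum, ← Complex.re_sum, ← Finset.mul_sum, parseval es hes ψ w]
    rw [h1, hw0]
    simp
  have hwsum : ∑ i0, 4 * Complex.normSq (inn (es i0) w) = 4 * nsq w := by
    rw [← Finset.mul_sum, parseval_nsq es hes w]
  rw [hc1, hrsum, hwsum, add_zero] at hsum
  rw [if_pos (by rw [hP]; exact ne_of_gt hPpos), hP]
  linarith

end Bracket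

section Mink

lemma minkowski {G X : Type*} [Fintype G] [Fintype X] {n : ℕ} (z : G → Fin n → X → ℂ) :
    ∑ g, nsq (fun x => ∑ m, z g m x) ≤ (∑ m, Real.sqrt (∑ g, nsq (z g m)))^2 := by
  set Y : Fin n → EuclideanSpace ℂ (G × X) := fun m => WithLp.toLp 2 (fun p => z p.1 m p.2) with hY
  have happ : ∀ (m : Fin n) (p : G × X), Y m p = z p.1 m p.2 := fun m p => rfl
  have hsumapp : ∀ p : G × X, (∑ m, Y m) p = ∑ m, z p.1 m p.2 := by
    intro p
    rw [WithLp.ofLp_sum, Finset.sum_apply]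
  have hnorm : ∀ m, ‖Y m‖ = Real.sqrt (∑ g, nsq (z g m)) := by
    intro m
    rw [EuclideanSpace.norm_eq]
    congr 1
    rw [Fintype.sum_prod_type]
    unfold nsq
    exact Finset.sum_congr rfl fun g _ => Finset.sum_congr rfl fun x _ => by
      rw [happ, Complex.sq_norm]
  have hL : ∑ g, nsq (fun x => ∑ m, z g m x) = ‖∑ m, Y m‖^2 := by
    rw [EuclideanSpace.norm_eq, Real.sq_sqrt (Finset.sum_nonneg fun p _ => by positivity)]
    rw [Fintype.sum_prod_type]
    unfold nsq
    exact Finset.sum_congr rfl fun g _ => Finset.sum_congr rfl fun x _ => by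
      rw [hsumapp (g, x), Complex.sq_norm]
  rw [hL]
  have h1 : ‖∑ m, Y m‖ ≤ ∑ m, ‖Y m‖ := norm_sum_le _ _
  have h2 : (∑ m, ‖Y m‖) = ∑ m, Real.sqrt (∑ g, nsq (z g m)) :=
    Finset.sum_congr rfl fun m _ => hnorm m
  calc ‖∑ m, Y m‖^2 ≤ (∑ m, ‖Y m‖)^2 := by
        apply pow_le_pow_left₀ (norm_nonneg _) h1
    _ = _ := by rw [h2]

lemma geom_bound (a : ℝ) (h0 : 0 ≤ a) (h1 : a < 1) (n : ℕ) :
    ∑ i ∈ Finset.range n, a^i ≤ (1-a)⁻¹ := by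
  have hpos : 0 < 1 - a := by linarith
  have key : (∑ i ∈ Finset.range n, a^i) * (1 - a) = 1 - a^n := by
    have h2 : (∑ i ∈ Finset.range n, a^i) * (1 - a)
        = -((∑ i ∈ Finset.range n, a^i) * (a - 1)) := by ring
    rw [h2, geom_sum_mul]; ring
  have han : 0 ≤ a^n := pow_nonneg h0 n
  have hinv : (1-a)⁻¹ * (1-a) = 1 := inv_mul_cancel₀ (ne_of_gt hpos)
  nlinarith [key, han, hpos, hinv]

end Mink
/-- Proposition: QFI is achieved up to a constant by adaptive output
measurements. Under stationarity of `ψ ⊗ χ`, the phase condition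
`⟨ψ⊗χ|W*Ẇ|ψ⊗χ⟩ = 0`, and exponential purification `Tr((1-|ψ⟩⟨ψ|) Tᵐ(τ)) ≤ a^{2m}`, if an
adaptive sequential output measurement supplemented by a final measurement of the system
attains the quantum Fisher information `F n` of the joint pure state, then the classical
Fisher information `I n` of the output record alone satisfies `F n - I n ≤ 4/(1-a)²`. -/
theorem output_CFI_close_to_QFI
    (D k : ℕ) (θ0 : ℝ)
    (W : ℝ → Matrix (Fin D × Fin k) (Fin D × Fin k) ℂ)
    (hWu : ∀ θ, W θ ∈ Matrix.unitaryGroup (Fin D × Fin k) ℂ)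
    (Wd : Matrix (Fin D × Fin k) (Fin D × Fin k) ℂ)
    (hWd : ∀ p q, HasDerivAt (fun θ => W θ p q) (Wd p q) θ0)
    (ψ : Fin D → ℂ) (χ : Fin k → ℂ) (hψ : nsq ψ = 1) (hχ : nsq χ = 1)
    -- (i) stationarity of the pure state ψ ⊗ χ
    (hstat : (W θ0).mulVec (vtens ψ χ) = vtens ψ χ)
    -- (ii) phase condition ⟨ψ⊗χ| W* Ẇ |ψ⊗χ⟩ = 0
    (hphase : inn (vtens ψ χ) (((W θ0)ᴴ * Wd).mulVec (vtens ψ χ)) = 0)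
    -- (iii) exponential convergence to the stationary state on the support of τ
    (a : ℝ) (ha0 : 0 ≤ a) (ha1 : a < 1)
    (τ : Matrix (Fin D) (Fin D) ℂ)
    (hτ : τ = ptraceNoise (outer (Wd.mulVec (vtens ψ χ)) (Wd.mulVec (vtens ψ χ))))
    (hgap : ∀ m : ℕ,
      (((1 - outer ψ ψ) * ((tmap (W θ0) χ)^[m] τ)).trace).re ≤ a ^ (2 * m))
    -- the joint system-output state and its derivative
    (Ψ : (n : ℕ) → ℝ → (Fin D × (Fin n → Fin k)) → ℂ)
    (hΨ : ∀ n θ, Ψ n θ = (steps n (W θ)).mulVec (vtens ψ (vpow n χ)))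
    (Ψd : (n : ℕ) → (Fin D × (Fin n → Fin k)) → ℂ)
    (hΨd : ∀ n x, HasDerivAt (fun θ => Ψ n θ x) (Ψd n x) θ0)
    -- the quantum Fisher information of the joint pure state model at θ0
    (F : ℕ → ℝ)
    (hF : ∀ n, F n =
      4 * (nsq (Ψd n) - Complex.normSq (inn (Ψ n θ0) (Ψd n))))
    -- the adaptive measurement: bases for each unit, depending on previous outcomes
    (e : (n : ℕ) → Fin n → (Fin n → Fin k) → Fin k → Fin k → ℂ)
    (hadapt : ∀ n (j : Fin n) (g g' : Fin n → Fin k),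
      (∀ l : Fin n, l < j → g l = g' l) → e n j g = e n j g')
    (honb : ∀ n (j : Fin n) (g : Fin n → Fin k) (i i' : Fin k),
      inn (e n j g i) (e n j g i') = if i = i' then 1 else 0)
    -- the output likelihood and its derivative
    (p : (n : ℕ) → ℝ → (Fin n → Fin k) → ℝ)
    (hp : ∀ n θ g, p n θ g =
      nsq ((kprodFin fun j : Fin n => kraus (W θ) (e n j g (g j)) χ).mulVec ψ))
    (pd : (n : ℕ) → (Fin n → Fin k) → ℝ)
    (hpd : ∀ n g, HasDerivAt (fun θ => p n θ g) (pd n g) θ0)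
    -- the classical Fisher information of the output measurement record
    (I : ℕ → ℝ)
    (hI : ∀ n, I n =
      ∑ g ∈ Finset.univ.filter (fun g : Fin n → Fin k => p n θ0 g ≠ 0),
        (p n θ0 g)⁻¹ * (pd n g) ^ 2)
    -- the final projective measurement on the system ℂ^D, depending on the outcomes
    (es : (n : ℕ) → (Fin n → Fin k) → Fin D → Fin D → ℂ)
    (honbs : ∀ n (g : Fin n → Fin k) (i i' : Fin D),
      inn (es n g i) (es n g i') = if i = i' then 1 else 0)
    -- the augmented likelihood (output record together with the final system outcome)
    (q : (n : ℕ) → ℝ → (Fin n → Fin k) → Fin D → ℝ)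
    (hq : ∀ n θ g i0, q n θ g i0 =
      nsq ((outer (es n g i0) (es n g i0)).mulVec
        ((kprodFin fun j : Fin n => kraus (W θ) (e n j g (g j)) χ).mulVec ψ)))
    (qd : (n : ℕ) → (Fin n → Fin k) → Fin D → ℝ)
    (hqd : ∀ n g i0, HasDerivAt (fun θ => q n θ g i0) (qd n g i0) θ0)
    -- optimality: the total classical Fisher information equals the QFI
    (htot : ∀ n : ℕ,
      (∑ x ∈ Finset.univ.filter
          (fun x : (Fin n → Fin k) × Fin D => q n θ0 x.1 x.2 ≠ 0),
        (q n θ0 x.1 x.2)⁻¹ * (qd n x.1 x.2) ^ 2) = F n) :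
    ∀ n : ℕ, F n - I n ≤ 4 / (1 - a) ^ 2 := by

  intro n
  -- k ≠ 0
  have hkne : k ≠ 0 := by
    intro hk0
    subst hk0
    rw [nsq] at hχ
    simp at hχ
  -- local abbreviations
  set vθ : (Fin n → Fin k) → ℝ → Fin D → ℂ :=
    fun g θ => chain (fun j => kraus (W θ) (e n j g (g j)) χ) ψ with hvθ
  set y : (Fin n → Fin k) → Fin n → Fin D → ℂ :=
    fun g m => chain (Bm (W θ0) Wd χ (e n) m g) ψ with hy
  set u : (Fin n → Fin k) → Fin D → ℂ := fun g x => ∑ m, y g m x with hu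
  -- derivative of the conditional vector
  have hud : ∀ g x, HasDerivAt (fun θ => vθ g θ x) (u g x) θ0 := by
    intro g x
    have h := chain_hasDerivAt (θ0 := θ0) (fun j θ => kraus (W θ) (e n j g (g j)) χ)
      (fun j => kraus Wd (e n j g (g j)) χ)
      (fun j s t => kraus_hasDerivAt hWd (e n j g (g j)) χ s t)
      (fun _ => ψ) (fun _ => 0) (fun x => hasDerivAt_const θ0 (ψ x)) x
    have hz := congrFun (chain_zero (fun j => kraus (W θ0) (e n j g (g j)) χ)) x
    rw [hz, add_zero] at h
    convert h using 1
    rfl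
  -- identification of p and pd
  have hpid : ∀ θ g, p n θ g = nsq (vθ g θ) := by
    intro θ g
    rw [hp n θ g, kprodFin_mulVec, hvθ]
  have hpdid : ∀ g, pd n g = 2 * (inn (vθ g θ0) (u g)).re := by
    intro g
    refine HasDerivAt.unique (hpd n g) ?_
    have heq : (fun θ => p n θ g) = fun θ => ∑ x, Complex.normSq (vθ g θ x) :=
      funext fun θ => hpid θ g
    rw [heq]
    have h := HasDerivAt.fun_sum
      (fun x (_ : x ∈ Finset.univ) => hasDerivAt_normSq (hud g x))
    convert h using 1
    show 2 * (inn (vθ g θ0) (u g)).re = ∑ x, 2 * (conj (vθ g θ0 x) * u g x).re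
    rw [inn, Complex.re_sum, Finset.mul_sum]
  -- identification of q and qd
  have hnes : ∀ g i0, nsq (es n g i0) = 1 := by
    intro g i0
    rw [nsq_eq_re_inn, honbs n g i0 i0, if_pos rfl, Complex.one_re]
  have hqid : ∀ θ g i0, q n θ g i0 = Complex.normSq (inn (es n g i0) (vθ g θ)) := by
    intro θ g i0
    rw [hq n θ g i0, kprodFin_mulVec, outer_mulVec, nsq_smul, hnes g i0, mul_one, hvθ]
  have hqdid : ∀ g i0, qd n g i0
      = 2 * (conj (inn (es n g i0) (vθ g θ0)) * inn (es n g i0) (u g)).re := by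
    intro g i0
    refine HasDerivAt.unique (hqd n g i0) ?_
    have heq : (fun θ => q n θ g i0)
        = fun θ => Complex.normSq (inn (es n g i0) (vθ g θ)) :=
      funext fun θ => hqid θ g i0
    rw [heq]
    exact hasDerivAt_normSq (HasDerivAt.fun_sum
      (fun x (_ : x ∈ Finset.univ) => (hud g x).const_mul (conj (es n g i0 x))))
  -- stationarity of the conditional state
  have hstat2 : ∀ g, ∃ lam : ℂ, vθ g θ0 = lam • ψ := by
    intro g
    exact ⟨∏ j, inn (e n j g (g j)) χ, chain_eigen _ _ ψ
      (fun j => kraus_eigen (W θ0) ψ χ (e n j g (g j)) hstat)⟩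
  -- the Markov bound on the derivative sums
  have hτ2 : tmap Wd χ (outer ψ ψ) = τ := by rw [hτ, tmap_outer]
  have hym : ∀ m : Fin n,
      (∑ g, outer (y g m) (y g m)) = (tmap (W θ0) χ)^[n - m.val - 1] τ := by
    intro m
    have h := sum_outer_pch (k := k) hkne (W θ0) Wd χ ψ (e n) (hadapt n) (honb n) m
      (tmap_stat (W θ0) ψ χ hχ hstat) n (le_refl n)
    rw [if_neg (not_le.2 m.isLt), Nat.sub_self, pow_zero, one_smul, hτ2] at h
    rw [← h]
    exact Finset.sum_congr rfl fun g _ => by simp only [hy, chain_eq_pch]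
  have hgapm : ∀ m : Fin n,
      (∑ g, nsq ((1 - outer ψ ψ).mulVec (y g m))) ≤ a^(2*(n - m.val - 1)) := by
    intro m
    rw [Finset.sum_congr rfl fun g (_ : g ∈ Finset.univ) => nsq_Qproj_mulVec hψ (y g m)]
    rw [← Complex.re_sum, ← Matrix.trace_sum, ← Finset.mul_sum, hym m]
    exact hgap (n - m.val - 1)
  -- linearity of the projection applied to u
  have humv : ∀ g, (1 - outer ψ ψ).mulVec (u g)
      = fun x => ∑ m, (1 - outer ψ ψ).mulVec (y g m) x := by
    intro g
    funext x
    show ∑ t, (1 - outer ψ ψ) x t * (∑ m, y g m t) = _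
    rw [Finset.sum_congr rfl fun t (_ : t ∈ Finset.univ) =>
      Finset.mul_sum Finset.univ (fun m => y g m t) ((1 - outer ψ ψ) x t)]
    rw [Finset.sum_comm]
    rfl
  -- the quantitative bound
  have hEbound : ∑ g, nsq ((1 - outer ψ ψ).mulVec (u g)) ≤ ((1-a)⁻¹)^2 := by
    have hsq : 0 < 1 - a := by linarith
    calc ∑ g, nsq ((1 - outer ψ ψ).mulVec (u g))
        = ∑ g, nsq (fun x => ∑ m, (1 - outer ψ ψ).mulVec (y g m) x) :=
          Finset.sum_congr rfl fun g _ => by rw [humv g]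
      _ ≤ (∑ m : Fin n, Real.sqrt (∑ g, nsq ((1 - outer ψ ψ).mulVec (y g m))))^2 :=
          minkowski (fun g m => (1 - outer ψ ψ).mulVec (y g m))
      _ ≤ (∑ m : Fin n, a^(n - m.val - 1))^2 := by
          apply pow_le_pow_left₀ (Finset.sum_nonneg fun m _ => Real.sqrt_nonneg _)
          apply Finset.sum_le_sum
          intro m _
          have h1 : Real.sqrt (∑ g, nsq ((1 - outer ψ ψ).mulVec (y g m)))
              ≤ Real.sqrt (a^(2*(n - m.val - 1))) := Real.sqrt_le_sqrt (hgapm m)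
          have h2 : Real.sqrt (a^(2*(n - m.val - 1))) = a^(n - m.val - 1) := by
            rw [pow_mul' a 2 (n - m.val - 1)]
            exact Real.sqrt_sq (pow_nonneg ha0 _)
          rw [h2] at h1
          exact h1
      _ ≤ ((1-a)⁻¹)^2 := by
          apply pow_le_pow_left₀ (Finset.sum_nonneg fun m _ => pow_nonneg ha0 _)
          rw [Fin.sum_univ_eq_sum_range (fun i => a^(n - i - 1)) n]
          rw [Finset.sum_congr rfl fun i (hi : i ∈ Finset.range n) => by
            rw [show n - i - 1 = n - 1 - i by omega]]
          rw [Finset.sum_range_reflect (fun i => a^i) n]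
          exact geom_bound a ha0 ha1 n
  -- per-record bound
  have hGg : ∀ g,
      (∑ i0, if q n θ0 g i0 ≠ 0 then (q n θ0 g i0)⁻¹ * (qd n g i0)^2 else 0)
        - (if p n θ0 g ≠ 0 then (p n θ0 g)⁻¹ * (pd n g)^2 else 0)
      ≤ 4 * nsq ((1 - outer ψ ψ).mulVec (u g)) := by
    intro g
    obtain ⟨lam, hlamg⟩ := hstat2 g
    have hb := bracket_bound ψ (u g) hψ (es n g) (honbs n g) lam
    rw [Qproj_mulVec]
    calc (∑ i0, if q n θ0 g i0 ≠ 0 then (q n θ0 g i0)⁻¹ * (qd n g i0)^2 else 0)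
          - (if p n θ0 g ≠ 0 then (p n θ0 g)⁻¹ * (pd n g)^2 else 0)
        = (∑ i0, if Complex.normSq (inn (es n g i0) (lam • ψ)) ≠ 0 then
            (Complex.normSq (inn (es n g i0) (lam • ψ)))⁻¹
              * (2 * (conj (inn (es n g i0) (lam • ψ)) * inn (es n g i0) (u g)).re)^2 else 0)
          - (if nsq (lam • ψ) ≠ 0 then
              (nsq (lam • ψ))⁻¹ * (2 * (inn (lam • ψ) (u g)).re)^2 else 0) := by
          rw [Finset.sum_congr rfl fun i0 (_ : i0 ∈ Finset.univ) => by
            rw [hqid θ0 g i0, hqdid g i0, hlamg]]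
          rw [hpid θ0 g, hpdid g, hlamg]
      _ ≤ 4 * nsq (fun x => u g x - inn ψ (u g) * ψ x) := hb
  -- assemble
  have htot2 := htot n
  have hI2 := hI n
  have hsum1 : (∑ x ∈ Finset.univ.filter
        (fun x : (Fin n → Fin k) × Fin D => q n θ0 x.1 x.2 ≠ 0),
      (q n θ0 x.1 x.2)⁻¹ * (qd n x.1 x.2) ^ 2)
      = ∑ g : Fin n → Fin k, ∑ i0 : Fin D,
          if q n θ0 g i0 ≠ 0 then (q n θ0 g i0)⁻¹ * (qd n g i0)^2 else 0 := by
    rw [Finset.sum_filter, Fintype.sum_prod_type]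
  have hsum2 : I n = ∑ g : Fin n → Fin k,
      if p n θ0 g ≠ 0 then (p n θ0 g)⁻¹ * (pd n g)^2 else 0 := by
    rw [hI2, Finset.sum_filter]
  have hfinal : F n - I n ≤ 4 * (((1-a)⁻¹)^2) := by
    rw [← htot2, hsum1, hsum2, ← Finset.sum_sub_distrib]
    calc (∑ g : Fin n → Fin k,
          ((∑ i0, if q n θ0 g i0 ≠ 0 then (q n θ0 g i0)⁻¹ * (qd n g i0)^2 else 0)
            - (if p n θ0 g ≠ 0 then (p n θ0 g)⁻¹ * (pd n g)^2 else 0)))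
        ≤ ∑ g : Fin n → Fin k, 4 * nsq ((1 - outer ψ ψ).mulVec (u g)) :=
          Finset.sum_le_sum fun g _ => hGg g
      _ = 4 * ∑ g, nsq ((1 - outer ψ ψ).mulVec (u g)) := by rw [Finset.mul_sum]
      _ ≤ 4 * (((1-a)⁻¹)^2) := by linarith [hEbound]
  calc F n - I n ≤ 4 * (((1-a)⁻¹)^2) := hfinal
    _ = 4 / (1 - a)^2 := by rw [inv_pow, div_eq_mul_inv]
end Recursion
end
end

section
/- Let W_θ be a differentiable family of unitaries on ℂ^D ⊗ ℂ^k, W = W_{θ0}, Ẇ = (d/dθ)W_θ|_{θ0}, with unit vectors ψ ∈ ℂ^D, χ ∈ ℂ^k satisfying W(ψ⊗χ) = ψ⊗χ. Let T(ρ) = Tr_u(W(ρ⊗|χ⟩⟨χ|)W*) be the transition operator on ℂ^D and τ = Tr_u(Ẇ|ψ⊗χ⟩⟨ψ⊗χ|Ẇ*). Then for all 1 ≤ j ≤ n, ‖ (P^⊥_ψ ⊗ 1) W^(n)···W^(j+1) Ẇ^(j) (ψ ⊗ χ^⊗n) ‖² = Tr( P^⊥_ψ T^{n−j}(τ) ),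 where P^⊥_ψ = 1 − |ψ⟩⟨ψ| on ℂ^D and W^(l), Ẇ^(l) are the ampliations acting on the system and the l-th noise unit. -/
open scoped BigOperators Matrix Kronecker ComplexConjugate Classical
open Matrix

noncomputable section

/-- The partial product `W⁽ⁿ⁾ ⋯ W⁽ʲ⁺¹⁾` (0-indexed: ampliations at units `> m`). -/
def stepsAfter {α ι : Type*} [Fintype α] [Fintype ι] [DecidableEq α] [DecidableEq ι]
    (n : ℕ) (W : Matrix (α × ι) (α × ι) ℂ) (m : ℕ) :
    Matrix (α × (Fin n → ι)) (α × (Fin n → ι)) ℂ :=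
  ((List.ofFn fun l : Fin n => if m < (l : ℕ) then amp n W l else 1).reverse).prod

set_option linter.unusedSectionVars false

namespace P15
variable {α ι : Type*} [Fintype α] [Fintype ι] [DecidableEq α] [DecidableEq ι]

lemma split_lemma {n : ℕ} (p : Fin n) (F G : ι → ℂ) (K : (Fin n → ι) → ℂ)
    (hK : ∀ g u, K (Function.update g p u) = K g) (hG : ∑ u, G u = 1) :
    ∑ g, F (g p) * K g = (∑ u, F u) * ∑ g, G (g p) * K g := by
  have h1 : ∑ g, F (g p) * K g
      = ∑ x : (Fin n → ι) × ι, G x.2 * (F (x.1 p) * K x.1) := by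
    rw [Fintype.sum_prod_type]
    refine Finset.sum_congr rfl fun g _ => ?_
    dsimp only
    rw [← Finset.sum_mul, hG, one_mul]
  have h2 : ∑ x : (Fin n → ι) × ι, G x.2 * (F (x.1 p) * K x.1)
      = ∑ x : (Fin n → ι) × ι, G (x.1 p) * (F x.2 * K x.1) := by
    refine Fintype.sum_equiv
      ⟨fun x => (Function.update x.1 p x.2, x.1 p),
       fun x => (Function.update x.1 p x.2, x.1 p),
       fun x => by simp [Function.update_idem],
       fun x => by simp [Function.update_idem]⟩ _ _ fun x => ?_
    simp only [Equiv.coe_fn_mk]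
    rw [Function.update_self, hK]
  rw [h1, h2, Fintype.sum_prod_type, Finset.sum_comm, Finset.sum_mul]
  refine Finset.sum_congr rfl fun u _ => ?_
  rw [Finset.mul_sum]
  exact Finset.sum_congr rfl fun g _ => by ring

lemma sum_offdiag {n : ℕ} {M : Type*} [AddCommMonoid M] (p : Fin n) (g : Fin n → ι)
    (F : (Fin n → ι) → M) :
    ∑ h, (if ∀ l, l ≠ p → g l = h l then F h else 0) = ∑ u, F (Function.update g p u) := by
  have key : ∀ h : Fin n → ι, (if ∀ l, l ≠ p → g l = h l then F h else 0)
      = ∑ u, if Function.update g p u = h then F h else 0 := by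
    intro h
    by_cases hc : ∀ l, l ≠ p → g l = h l
    · rw [if_pos hc]
      have hup : Function.update g p (h p) = h := by
        funext l
        by_cases hl : l = p
        · subst hl; simp
        · rw [Function.update_of_ne hl]; exact hc l hl
      rw [Finset.sum_eq_single (h p)]
      · rw [if_pos hup]
      · intro u _ hu
        rw [if_neg]
        intro e
        exact hu (by rw [← e, Function.update_self])
      · intro hmem; exact absurd (Finset.mem_univ _) hmem
    · rw [if_neg hc]
      symm
      apply Finset.sum_eq_zero
      intro u _
      rw [if_neg]
      intro e
      exact hc fun l hl => by rw [← e, Function.update_of_ne hl]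
  rw [Finset.sum_congr rfl fun h _ => key h, Finset.sum_comm]
  refine Finset.sum_congr rfl fun u _ => ?_
  simp

lemma amp_mulVec {n : ℕ} (W : Matrix (α × ι) (α × ι) ℂ) (p : Fin n)
    (v : α × (Fin n → ι) → ℂ) (s : α) (g : Fin n → ι) :
    (amp n W p).mulVec v (s, g)
      = ∑ t, ∑ u, W (s, g p) (t, u) * v (t, Function.update g p u) := by
  simp only [Matrix.mulVec, dotProduct, amp, Fintype.sum_prod_type, ite_mul, zero_mul]
  refine Finset.sum_congr rfl fun t _ => ?_
  rw [sum_offdiag p g (fun h => W (s, g p) (t, h p) * v (t, h))]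
  refine Finset.sum_congr rfl fun u _ => ?_
  rw [Function.update_self]

lemma prod_update_high {n : ℕ} (χ : ι → ℂ) (m : ℕ) (p : Fin n) (hp : (p : ℕ) = m + 1)
    (g : Fin n → ι) (u : ι) :
    (∏ l : Fin n, if m < (l : ℕ) then χ (Function.update g p u l) else 1)
      = χ u * ∏ l : Fin n, if m + 1 < (l : ℕ) then χ (g l) else 1 := by
  have key : ∀ l : Fin n, (if m < (l : ℕ) then χ (Function.update g p u l) else 1)
      = (if l = p then χ u else 1) * (if m + 1 < (l : ℕ) then χ (g l) else 1) := by
    intro l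
    by_cases hl : l = p
    · subst hl
      simp [hp]
    · have hl' : (l : ℕ) ≠ m + 1 := by
        intro h; exact hl (Fin.ext (by rw [h, hp]))
      rw [Function.update_of_ne hl, if_neg hl, one_mul]
      by_cases h2 : m < (l : ℕ)
      · rw [if_pos h2, if_pos (by omega)]
      · rw [if_neg h2, if_neg (by omega)]
  rw [Finset.prod_congr rfl fun l _ => key l, Finset.prod_mul_distrib]
  congr 1
  simp

lemma prod_update_all {n : ℕ} (χ : ι → ℂ) (p : Fin n) (g : Fin n → ι) (u : ι) :
    (∏ l : Fin n, χ (Function.update g p u l))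
      = χ u * ∏ l : Fin n, if l = p then 1 else χ (g l) := by
  have key : ∀ l : Fin n, χ (Function.update g p u l)
      = (if l = p then χ u else 1) * (if l = p then 1 else χ (g l)) := by
    intro l
    by_cases hl : l = p
    · subst hl; simp
    · simp [Function.update_of_ne hl, hl]
  rw [Finset.prod_congr rfl fun l _ => key l, Finset.prod_mul_distrib]
  congr 1
  simp

def Inv (n : ℕ) (χ : ι → ℂ) (m : ℕ) (v : α × (Fin n → ι) → ℂ) : Prop :=
  ∃ c : α → (Fin n → ι) → ℂ,
    (∀ s g (q : Fin n) u, m < (q : ℕ) → c s (Function.update g q u) = c s g) ∧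
    ∀ s g, v (s, g) = c s g * ∏ l : Fin n, if m < (l : ℕ) then χ (g l) else 1

lemma inv_struct {n : ℕ} (χ : ι → ℂ) (m : ℕ) (p : Fin n) (hp : (p : ℕ) = m + 1)
    (v : α × (Fin n → ι) → ℂ) (h : Inv n χ m v) :
    ∃ c : α → (Fin n → ι) → ℂ,
      (∀ s g u, c s (Function.update g p u) = c s g) ∧
      ∀ s g, v (s, g) = c s g * χ (g p) := by
  obtain ⟨c, hc, hv⟩ := h
  refine ⟨fun s g => c s g * ∏ l : Fin n, if m < (l : ℕ) ∧ l ≠ p then χ (g l) else 1, ?_, ?_⟩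
  · intro s g u
    dsimp only
    rw [hc s g p u (by omega)]
    congr 1
    refine Finset.prod_congr rfl fun l _ => ?_
    by_cases hl : l = p
    · simp [hl]
    · rw [Function.update_of_ne hl]
  · intro s g
    rw [hv s g, mul_assoc]
    congr 1
    have key : ∀ l : Fin n, (if m < (l : ℕ) then χ (g l) else 1)
        = (if m < (l : ℕ) ∧ l ≠ p then χ (g l) else 1) * (if l = p then χ (g l) else 1) := by
      intro l
      by_cases hl : l = p
      · subst hl; simp [hp]
      · simp [hl]
    rw [Finset.prod_congr rfl fun l _ => key l, Finset.prod_mul_distrib]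
    congr 1
    simp

lemma step_inv {n : ℕ} (χ : ι → ℂ) (W : Matrix (α × ι) (α × ι) ℂ) (m : ℕ) (p : Fin n)
    (hp : (p : ℕ) = m + 1) (v : α × (Fin n → ι) → ℂ) (h : Inv n χ m v) :
    Inv n χ (m + 1) ((amp n W p).mulVec v) := by
  obtain ⟨c, hc, hv⟩ := h
  refine ⟨fun s g => ∑ t, ∑ u, W (s, g p) (t, u) * (χ u * c t g), ?_, ?_⟩
  · intro s g q u hq
    have hpq : p ≠ q := by
      intro e; rw [e] at hp; omega
    dsimp only
    refine Finset.sum_congr rfl fun t _ => Finset.sum_congr rfl fun u' _ => ?_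
    rw [Function.update_of_ne hpq, hc t g q u (by omega)]
  · intro s g
    rw [amp_mulVec]
    rw [Finset.sum_mul]
    refine Finset.sum_congr rfl fun t _ => ?_
    rw [Finset.sum_mul]
    refine Finset.sum_congr rfl fun u _ => ?_
    rw [hv, hc t g p u (by omega), prod_update_high χ m p hp g u]
    ring

lemma step_ptr {n : ℕ} (χ : ι → ℂ) (hχ : ∑ u, χ u * conj (χ u) = 1)
    (W : Matrix (α × ι) (α × ι) ℂ) (p : Fin n)
    (v : α × (Fin n → ι) → ℂ) (c : α → (Fin n → ι) → ℂ)
    (hc : ∀ s g u, c s (Function.update g p u) = c s g)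
    (hv : ∀ s g, v (s, g) = c s g * χ (g p)) :
    ptraceNoise (outer ((amp n W p).mulVec v) ((amp n W p).mulVec v))
      = tmap W χ (ptraceNoise (outer v v)) := by
  ext s t
  set ρ := ptraceNoise (outer v v) with hρdef
  have hA : ∀ (s : α) (g : Fin n → ι),
      (amp n W p).mulVec v (s, g) = ∑ y : α × ι, W (s, g p) y * (c y.1 g * χ y.2) := by
    intro s g
    rw [amp_mulVec, Fintype.sum_prod_type]
    exact Finset.sum_congr rfl fun t' _ => Finset.sum_congr rfl fun u _ => by
      rw [hv, hc, Function.update_self]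
  have hρ : ∀ t1 t2, ρ t1 t2
      = ∑ g, (χ (g p) * conj (χ (g p))) * (c t1 g * conj (c t2 g)) := by
    intro t1 t2
    simp only [hρdef, ptraceNoise, outer]
    refine Finset.sum_congr rfl fun g _ => ?_
    rw [hv, hv]
    simp only [_root_.map_mul]
    ring
  have hR : tmap W χ ρ s t
      = ∑ y : α × ι, ∑ z : α × ι,
          (χ y.2 * conj (χ z.2)) * ((∑ u, W (s, u) y * conj (W (t, u) z)) * ρ y.1 z.1) := by
    simp only [tmap, ptraceNoise, Matrix.mul_apply, Matrix.conjTranspose_apply,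
      Matrix.kroneckerMap_apply, outer, Complex.star_def]
    simp only [Finset.sum_mul, Finset.mul_sum]
    rw [Finset.sum_comm]
    refine (Finset.sum_congr rfl fun z _ => Finset.sum_comm).trans ?_
    rw [Finset.sum_comm]
    refine Finset.sum_congr rfl fun y _ => Finset.sum_congr rfl fun z _ =>
      Finset.sum_congr rfl fun u _ => by ring
  have hL : ptraceNoise (outer ((amp n W p).mulVec v) ((amp n W p).mulVec v)) s t
      = ∑ y : α × ι, ∑ z : α × ι, (χ y.2 * conj (χ z.2)) *
          ((∑ u, W (s, u) y * conj (W (t, u) z)) *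
            ∑ g, (χ (g p) * conj (χ (g p))) * (c y.1 g * conj (c z.1 g))) := by
    simp only [ptraceNoise, outer]
    calc ∑ g, (amp n W p).mulVec v (s, g) * conj ((amp n W p).mulVec v (t, g))
        = ∑ g, ∑ y : α × ι, ∑ z : α × ι,
            (χ y.2 * conj (χ z.2)) * ((W (s, g p) y * conj (W (t, g p) z))
              * (c y.1 g * conj (c z.1 g))) := by
          refine Finset.sum_congr rfl fun g _ => ?_
          rw [hA, hA, map_sum, Finset.sum_mul_sum]
          refine Finset.sum_congr rfl fun y _ => Finset.sum_congr rfl fun z _ => ?_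
          simp only [_root_.map_mul]
          ring
      _ = ∑ y : α × ι, ∑ z : α × ι, ∑ g,
            (χ y.2 * conj (χ z.2)) * ((W (s, g p) y * conj (W (t, g p) z))
              * (c y.1 g * conj (c z.1 g))) := by
          rw [Finset.sum_comm]
          exact Finset.sum_congr rfl fun y _ => Finset.sum_comm
      _ = ∑ y : α × ι, ∑ z : α × ι, (χ y.2 * conj (χ z.2)) *
            ((∑ u, W (s, u) y * conj (W (t, u) z)) *
              ∑ g, (χ (g p) * conj (χ (g p))) * (c y.1 g * conj (c z.1 g))) := by
          refine Finset.sum_congr rfl fun y _ => Finset.sum_congr rfl fun z _ => ?_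
          rw [← Finset.mul_sum]
          congr 1
          exact split_lemma p (fun u => W (s, u) y * conj (W (t, u) z))
            (fun u => χ u * conj (χ u)) (fun g => c y.1 g * conj (c z.1 g))
            (fun g u => by simp only [hc]) hχ
  rw [hL, hR]
  exact Finset.sum_congr rfl fun y _ => Finset.sum_congr rfl fun z _ => by rw [hρ y.1 z.1]

lemma sum_prod_pow {ι : Type*} [Fintype ι] : ∀ {n : ℕ} (h : ι → ℂ), (∑ u, h u = 1) →
    ∑ g : Fin n → ι, ∏ l, h (g l) = 1 := by
  intro n
  induction n with
  | zero => intro h hh; simp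
  | succ n ih =>
    intro h hh
    rw [← (Fin.consEquiv fun _ : Fin (n+1) => ι).sum_comp (fun g => ∏ l, h (g l))]
    rw [Fintype.sum_prod_type]
    have : ∀ (u : ι) (g' : Fin n → ι),
        ∏ l, h ((Fin.consEquiv fun _ : Fin (n+1) => ι) (u, g') l) = h u * ∏ l, h (g' l) := by
      intro u g'
      simp [Fin.consEquiv, Fin.prod_univ_succ]
    calc ∑ u, ∑ g' : Fin n → ι, ∏ l, h ((Fin.consEquiv fun _ : Fin (n+1) => ι) (u, g') l)
        = ∑ u, ∑ g' : Fin n → ι, h u * ∏ l, h (g' l) := by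
          exact Finset.sum_congr rfl fun u _ => Finset.sum_congr rfl fun g' _ => this u g'
      _ = ∑ u, h u * ∑ g' : Fin n → ι, ∏ l, h (g' l) := by
          exact Finset.sum_congr rfl fun u _ => (Finset.mul_sum _ _ _).symm
      _ = 1 := by rw [ih h hh]; simpa using hh

lemma base_inv {n : ℕ} (χ : ι → ℂ) (Wd : Matrix (α × ι) (α × ι) ℂ) (ψ : α → ℂ)
    (p0 : Fin n) :
    Inv n χ (p0 : ℕ) ((amp n Wd p0).mulVec (vtens ψ (vpow n χ))) := by
  refine ⟨fun s g => (∑ t, ∑ u, Wd (s, g p0) (t, u) * (ψ t * χ u)) *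
      ∏ l : Fin n, if (l : ℕ) < (p0 : ℕ) then χ (g l) else 1, ?_, ?_⟩
  · intro s g q u hq
    have h1 : p0 ≠ q := fun e => by rw [e] at hq; omega
    dsimp only
    congr 1
    · rw [Function.update_of_ne h1]
    · refine Finset.prod_congr rfl fun l _ => ?_
      by_cases hl : (l : ℕ) < (p0 : ℕ)
      · rw [if_pos hl, if_pos hl,
          Function.update_of_ne (Fin.ne_of_val_ne (by omega : (l : ℕ) ≠ (q : ℕ)))]
      · rw [if_neg hl, if_neg hl]
  · intro s g
    rw [amp_mulVec]
    have key : ∀ (t : α) (u : ι), vtens ψ (vpow n χ) (t, Function.update g p0 u)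
        = ψ t * (χ u * ∏ l : Fin n, if l = p0 then 1 else χ (g l)) := by
      intro t u
      simp only [vtens, vpow]
      rw [prod_update_all χ p0 g u]
    have hQ : (∏ l : Fin n, if l = p0 then 1 else χ (g l))
        = (∏ l : Fin n, if (l : ℕ) < (p0 : ℕ) then χ (g l) else 1)
          * ∏ l : Fin n, if (p0 : ℕ) < (l : ℕ) then χ (g l) else 1 := by
      rw [← Finset.prod_mul_distrib]
      refine Finset.prod_congr rfl fun l _ => ?_
      by_cases hl : l = p0
      · subst hl; simp
      · have hl' : (l : ℕ) ≠ (p0 : ℕ) := fun e => hl (Fin.ext e)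
        rw [if_neg hl]
        rcases lt_or_gt_of_ne hl' with h | h
        · rw [if_pos h, if_neg (by omega), mul_one]
        · rw [if_neg (by omega), if_pos h, one_mul]
    simp only [key, hQ]
    simp only [Finset.sum_mul]
    exact Finset.sum_congr rfl fun t _ => Finset.sum_congr rfl fun u _ => by ring

set_option maxHeartbeats 1000000 in
lemma base_ptr {n : ℕ} (χ : ι → ℂ) (hχ : ∑ u, χ u * conj (χ u) = 1)
    (Wd : Matrix (α × ι) (α × ι) ℂ) (ψ : α → ℂ) (p0 : Fin n) :
    ptraceNoise (outer ((amp n Wd p0).mulVec (vtens ψ (vpow n χ)))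
        ((amp n Wd p0).mulVec (vtens ψ (vpow n χ))))
      = ptraceNoise (outer (Wd.mulVec (vtens ψ χ)) (Wd.mulVec (vtens ψ χ))) := by
  ext s t
  have hw : ∀ (s : α) (u : ι), Wd.mulVec (vtens ψ χ) (s, u)
      = ∑ t', ∑ u', Wd (s, u) (t', u') * (ψ t' * χ u') := by
    intro s u
    simp only [Matrix.mulVec, dotProduct, vtens, Fintype.sum_prod_type]
  have hv0 : ∀ (s : α) (g : Fin n → ι),
      (amp n Wd p0).mulVec (vtens ψ (vpow n χ)) (s, g)
        = Wd.mulVec (vtens ψ χ) (s, g p0) * ∏ l : Fin n, if l = p0 then 1 else χ (g l) := by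
    intro s g
    rw [amp_mulVec, hw, Finset.sum_mul]
    refine Finset.sum_congr rfl fun t' _ => ?_
    rw [Finset.sum_mul]
    refine Finset.sum_congr rfl fun u _ => ?_
    simp only [vtens, vpow]
    rw [prod_update_all χ p0 g u]
    ring
  simp only [ptraceNoise, outer]
  have hK : ∀ (g : Fin n → ι) (u : ι),
      ((fun g => (∏ l : Fin n, if l = p0 then 1 else χ (g l))
        * conj (∏ l : Fin n, if l = p0 then 1 else χ (g l))) (Function.update g p0 u))
      = (fun g => (∏ l : Fin n, if l = p0 then 1 else χ (g l))
        * conj (∏ l : Fin n, if l = p0 then 1 else χ (g l))) g := by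
    intro g u
    dsimp only
    have : (∏ l : Fin n, if l = p0 then 1 else χ (Function.update g p0 u l))
        = ∏ l : Fin n, if l = p0 then 1 else χ (g l) := by
      refine Finset.prod_congr rfl fun l _ => ?_
      by_cases hl : l = p0
      · simp [hl]
      · rw [if_neg hl, if_neg hl, Function.update_of_ne hl]
    rw [this]
  calc ∑ g, (amp n Wd p0).mulVec (vtens ψ (vpow n χ)) (s, g)
        * conj ((amp n Wd p0).mulVec (vtens ψ (vpow n χ)) (t, g))
      = ∑ g : Fin n → ι, (fun u => Wd.mulVec (vtens ψ χ) (s, u) * conj (Wd.mulVec (vtens ψ χ) (t, u))) (g p0)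
          * ((fun g => (∏ l : Fin n, if l = p0 then 1 else χ (g l))
            * conj (∏ l : Fin n, if l = p0 then 1 else χ (g l))) g) := by
        refine Finset.sum_congr rfl fun g _ => ?_
        rw [hv0, hv0]
        dsimp only
        simp only [_root_.map_mul]
        ring
    _ = (∑ u, Wd.mulVec (vtens ψ χ) (s, u) * conj (Wd.mulVec (vtens ψ χ) (t, u)))
        * ∑ g : Fin n → ι, (χ (g p0) * conj (χ (g p0)))
            * ((∏ l : Fin n, if l = p0 then 1 else χ (g l))
              * conj (∏ l : Fin n, if l = p0 then 1 else χ (g l))) := by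
        have hs := split_lemma p0
          (fun u => Wd.mulVec (vtens ψ χ) (s, u) * conj (Wd.mulVec (vtens ψ χ) (t, u)))
          (fun u => χ u * conj (χ u))
          (fun g => (∏ l : Fin n, if l = p0 then 1 else χ (g l))
            * conj (∏ l : Fin n, if l = p0 then 1 else χ (g l))) hK hχ
        exact hs
    _ = ∑ u, Wd.mulVec (vtens ψ χ) (s, u) * conj (Wd.mulVec (vtens ψ χ) (t, u)) := by
        have hmerge : ∀ g : Fin n → ι, (χ (g p0) * conj (χ (g p0)))
            * ((∏ l : Fin n, if l = p0 then 1 else χ (g l))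
              * conj (∏ l : Fin n, if l = p0 then 1 else χ (g l)))
            = ∏ l : Fin n, (χ (g l) * conj (χ (g l))) := by
          intro g
          have h1 : conj (∏ l : Fin n, if l = p0 then 1 else χ (g l))
              = ∏ l : Fin n, if l = p0 then 1 else conj (χ (g l)) := by
            rw [map_prod]
            exact Finset.prod_congr rfl fun l _ => by split <;> simp
          have h2 : χ (g p0) * conj (χ (g p0))
              = ∏ l : Fin n, if l = p0 then χ (g l) * conj (χ (g l)) else 1 := by
            simp
          rw [h1, h2, ← Finset.prod_mul_distrib, ← Finset.prod_mul_distrib]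
          refine Finset.prod_congr rfl fun l _ => ?_
          by_cases hl : l = p0 <;> simp [hl]
        rw [Finset.sum_congr rfl fun g _ => hmerge g, sum_prod_pow _ hχ, mul_one]

lemma listprod_ones {n : ℕ} {M : Type*} [Monoid M] (f : Fin n → M) (hf : ∀ l, f l = 1) :
    (List.ofFn f).reverse.prod = 1 := by
  apply List.prod_eq_one
  intro x hx
  rw [List.mem_reverse] at hx
  obtain ⟨i, rfl⟩ := List.mem_ofFn.1 hx
  exact hf i

lemma ofFn_ite_prod_succ {M : Type*} [Monoid M] :
    ∀ (n : ℕ) (A : Fin n → M) (m : ℕ) (hm : m + 1 < n),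
    (List.ofFn fun l : Fin n => if m < (l : ℕ) then A l else 1).reverse.prod
      = (List.ofFn fun l : Fin n => if m + 1 < (l : ℕ) then A l else 1).reverse.prod
        * A ⟨m + 1, hm⟩ := by
  intro n
  induction n with
  | zero => intro A m hm; omega
  | succ n ih =>
    intro A m hm
    rw [List.ofFn_succ' (fun l : Fin (n+1) => if m < (l : ℕ) then A l else 1),
        List.ofFn_succ' (fun l : Fin (n+1) => if m + 1 < (l : ℕ) then A l else 1),
        List.concat_eq_append, List.concat_eq_append,
        List.reverse_append, List.reverse_append]
    simp only [List.reverse_singleton, List.singleton_append, List.prod_cons,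
      Fin.val_last, Fin.coe_castSucc]
    by_cases hlt : m + 1 < n
    · rw [if_pos (by omega), if_pos hlt,
        ih (fun i => A i.castSucc) m hlt, mul_assoc]
      congr 2
    · have hn : m + 1 = n := by omega
      rw [if_pos (by omega), if_neg (by omega)]
      have e1 : (List.ofFn fun i : Fin n =>
          if m < (i : ℕ) then A i.castSucc else 1).reverse.prod = 1 :=
        listprod_ones _ (fun i => if_neg (by have := i.isLt; omega))
      have e2 : (List.ofFn fun i : Fin n =>
          if m + 1 < (i : ℕ) then A i.castSucc else 1).reverse.prod = 1 :=
        listprod_ones _ (fun i => if_neg (by have := i.isLt; omega))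
      rw [e1, e2, mul_one, one_mul, one_mul]
      exact congrArg A (Fin.ext (by simp [hn]))

lemma stepsAfter_ge {n : ℕ} (W : Matrix (α × ι) (α × ι) ℂ) (m : ℕ) (hm : n ≤ m + 1) :
    stepsAfter n W m = 1 := by
  unfold stepsAfter
  exact listprod_ones _ (fun l => if_neg (by have := l.isLt; omega))

lemma stepsAfter_succ {n : ℕ} (W : Matrix (α × ι) (α × ι) ℂ) (m : ℕ) (hm : m + 1 < n) :
    stepsAfter n W m = stepsAfter n W (m + 1) * amp n W ⟨m + 1, hm⟩ :=
  ofFn_ite_prod_succ n (fun l => amp n W l) m hm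

lemma main_ind {n : ℕ} (χ : ι → ℂ) (hχ : ∑ u, χ u * conj (χ u) = 1)
    (W : Matrix (α × ι) (α × ι) ℂ) :
    ∀ (d m : ℕ) (v : α × (Fin n → ι) → ℂ), m + d + 1 = n → Inv n χ m v →
    ptraceNoise (outer ((stepsAfter n W m).mulVec v) ((stepsAfter n W m).mulVec v))
      = (tmap W χ)^[d] (ptraceNoise (outer v v)) := by
  intro d
  induction d with
  | zero =>
    intro m v hmn _
    rw [stepsAfter_ge W m (by omega), Matrix.one_mulVec, Function.iterate_zero_apply]
  | succ d ih =>
    intro m v hmn hInv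
    have hm1 : m + 1 < n := by omega
    rw [stepsAfter_succ W m hm1, ← Matrix.mulVec_mulVec]
    obtain ⟨c, hc, hv⟩ := inv_struct χ m ⟨m + 1, hm1⟩ rfl v hInv
    have h1 := step_ptr χ hχ W ⟨m + 1, hm1⟩ v c hc hv
    have h2 : Inv n χ (m + 1) ((amp n W ⟨m + 1, hm1⟩).mulVec v) :=
      step_inv χ W m ⟨m + 1, hm1⟩ rfl v hInv
    rw [ih (m + 1) ((amp n W ⟨m + 1, hm1⟩).mulVec v) (by omega) h2, h1,
      Function.iterate_succ_apply]

lemma stepA {β : Type*} [Fintype β] (ψ : α → ℂ) (hψ : ∑ s, ψ s * conj (ψ s) = 1)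
    (V : α × β → ℂ) :
    ((nsq fun x : α × β => V x - ψ x.1 * ∑ t, conj (ψ t) * V (t, x.2)) : ℂ)
      = (((1 : Matrix α α ℂ) - outer ψ ψ) * ptraceNoise (outer V V)).trace := by
  have key : ∀ (f : α × β → ℂ), ((nsq f : ℝ) : ℂ) = ∑ x, f x * conj (f x) := by
    intro f
    rw [nsq, Complex.ofReal_sum]
    exact Finset.sum_congr rfl fun x _ => (Complex.mul_conj (f x)).symm
  rw [key, Matrix.sub_mul, Matrix.one_mul, Matrix.trace_sub]
  have hconj_a : ∀ g : β, conj (∑ t, conj (ψ t) * V (t, g)) = ∑ t, ψ t * conj (V (t, g)) := by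
    intro g
    rw [map_sum]
    exact Finset.sum_congr rfl fun t' _ => by rw [_root_.map_mul, Complex.conj_conj]
  have expand : ∀ x : α × β,
      (V x - ψ x.1 * ∑ t, conj (ψ t) * V (t, x.2))
        * conj (V x - ψ x.1 * ∑ t, conj (ψ t) * V (t, x.2))
      = V x * conj (V x)
        - V x * (conj (ψ x.1) * conj (∑ t, conj (ψ t) * V (t, x.2)))
        - ψ x.1 * (∑ t, conj (ψ t) * V (t, x.2)) * conj (V x)
        + (ψ x.1 * conj (ψ x.1)) * ((∑ t, conj (ψ t) * V (t, x.2))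
            * conj (∑ t, conj (ψ t) * V (t, x.2))) := by
    intro x
    simp only [map_sub, _root_.map_mul]
    ring
  rw [Finset.sum_congr rfl fun x _ => expand x]
  rw [Finset.sum_add_distrib, Finset.sum_sub_distrib, Finset.sum_sub_distrib]
  have hA2 : ∑ x : α × β, V x * (conj (ψ x.1) * conj (∑ t, conj (ψ t) * V (t, x.2)))
      = ∑ g : β, (∑ t, conj (ψ t) * V (t, g)) * conj (∑ t, conj (ψ t) * V (t, g)) := by
    rw [Fintype.sum_prod_type, Finset.sum_comm]
    refine Finset.sum_congr rfl fun g _ => ?_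
    rw [Finset.sum_mul]
    exact Finset.sum_congr rfl fun s _ => by ring
  have hA3 : ∑ x : α × β, ψ x.1 * (∑ t, conj (ψ t) * V (t, x.2)) * conj (V x)
      = ∑ g : β, (∑ t, conj (ψ t) * V (t, g)) * conj (∑ t, conj (ψ t) * V (t, g)) := by
    rw [Fintype.sum_prod_type, Finset.sum_comm]
    refine Finset.sum_congr rfl fun g _ => ?_
    rw [hconj_a, Finset.mul_sum]
    exact Finset.sum_congr rfl fun s _ => by ring
  have hA4 : ∑ x : α × β, (ψ x.1 * conj (ψ x.1)) * ((∑ t, conj (ψ t) * V (t, x.2))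
        * conj (∑ t, conj (ψ t) * V (t, x.2)))
      = ∑ g : β, (∑ t, conj (ψ t) * V (t, g)) * conj (∑ t, conj (ψ t) * V (t, g)) := by
    rw [Fintype.sum_prod_type, Finset.sum_comm]
    refine Finset.sum_congr rfl fun g _ => ?_
    dsimp only
    rw [← Finset.sum_mul, hψ, one_mul]
  have hT1 : (ptraceNoise (outer V V)).trace = ∑ x : α × β, V x * conj (V x) := by
    simp only [Matrix.trace, Matrix.diag_apply, ptraceNoise, outer]
    rw [Fintype.sum_prod_type]
  have hT2 : (outer ψ ψ * ptraceNoise (outer V V)).trace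
      = ∑ g : β, (∑ t, conj (ψ t) * V (t, g)) * conj (∑ t, conj (ψ t) * V (t, g)) := by
    simp only [Matrix.trace, Matrix.diag_apply, Matrix.mul_apply, ptraceNoise, outer]
    simp only [Finset.mul_sum]
    rw [Finset.sum_comm]
    refine (Finset.sum_congr rfl fun t' _ => Finset.sum_comm).trans ?_
    rw [Finset.sum_comm]
    refine Finset.sum_congr rfl fun g _ => ?_
    rw [hconj_a, Finset.sum_mul_sum]
    exact Finset.sum_congr rfl fun t' _ => Finset.sum_congr rfl fun s _ => by ring
  rw [hA2, hA3, hA4, hT1, hT2]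
  ring

lemma norm_sq_complex {ι : Type*} [Fintype ι] (χ : ι → ℂ) (h : nsq χ = 1) :
    ∑ u, χ u * conj (χ u) = 1 := by
  have h2 : ((nsq χ : ℝ) : ℂ) = 1 := by rw [h]; norm_num
  rw [nsq, Complex.ofReal_sum] at h2
  rw [← h2]
  exact Finset.sum_congr rfl fun u _ => Complex.mul_conj (χ u)

end P15

/-- `‖(P^⊥_ψ ⊗ 1) W⁽ⁿ⁾⋯W⁽ʲ⁺¹⁾ Ẇ⁽ʲ⁾ (ψ ⊗ χ^⊗n)‖² = Tr(P^⊥_ψ T^{n-j}(τ))`. -/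
theorem projected_excitation_norm_eq_trace
    (D k n : ℕ) (θ0 : ℝ)
    (W : ℝ → Matrix (Fin D × Fin k) (Fin D × Fin k) ℂ)
    (hWu : ∀ θ, W θ ∈ Matrix.unitaryGroup (Fin D × Fin k) ℂ)
    (Wd : Matrix (Fin D × Fin k) (Fin D × Fin k) ℂ)
    (hWd : ∀ x y, HasDerivAt (fun θ => W θ x y) (Wd x y) θ0)
    (ψ : Fin D → ℂ) (χ : Fin k → ℂ) (hψ : nsq ψ = 1) (hχ : nsq χ = 1)
    (hstat : (W θ0).mulVec (vtens ψ χ) = vtens ψ χ)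
    (τ : Matrix (Fin D) (Fin D) ℂ)
    (hτ : τ = ptraceNoise (outer (Wd.mulVec (vtens ψ χ)) (Wd.mulVec (vtens ψ χ))))
    (j : ℕ) (hj1 : 1 ≤ j) (hjn : j ≤ n)
    (V : (Fin D × (Fin n → Fin k)) → ℂ)
    (hV : V = (stepsAfter n (W θ0) (j - 1)
      * amp n Wd ⟨j - 1, by omega⟩).mulVec (vtens ψ (vpow n χ))) :
    (nsq (fun x : Fin D × (Fin n → Fin k) =>
        V x - ψ x.1 * ∑ t, conj (ψ t) * V (t, x.2)) : ℂ)
      = (((1 : Matrix (Fin D) (Fin D) ℂ) - outer ψ ψ)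
          * ((tmap (W θ0) χ)^[n - j] τ)).trace := by
  have hχℂ := P15.norm_sq_complex χ hχ
  have hψℂ := P15.norm_sq_complex ψ hψ
  have hB : ptraceNoise (outer V V) = (tmap (W θ0) χ)^[n - j] τ := by
    rw [hV, ← Matrix.mulVec_mulVec]
    rw [P15.main_ind χ hχℂ (W θ0) (n - j) (j - 1)
      ((amp n Wd ⟨j - 1, by omega⟩).mulVec (vtens ψ (vpow n χ))) (by omega)
      (P15.base_inv χ Wd ψ (⟨j - 1, by omega⟩ : Fin n))]
    rw [P15.base_ptr χ hχℂ Wd ψ (⟨j - 1, by omega⟩ : Fin n), ← hτ]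
  rw [P15.stepA ψ hψℂ V, hB]
end
end
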